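/- arXiv:2011.03150 — 7 statements merged into one kernel-verified Lean document; each statement's English description precedes it below -/
import Mathlib

section
/- If f : ℝ → X is Stepanov p-almost periodic (1 ≤ p < ∞) and uniformly continuous on ℝ, then f is Bohr almost periodic. -/
open MeasureTheory Set

/-- Stepanov `p`-almost periodicity. -/
def StepanovAP {X : Type*} [NormedAddCommGroup X] (p : ℝ) (f : ℝ → X) : Prop :=
  ∀ ε : ℝ, 0 < ε → ∃ l : ℝ, 0 < l ∧ ∀ a : ℝ, ∃ τ ∈ Set.Icc a (a + l),
    ∀ t : ℝ, (∫ s in Set.Ioc t (t + 1), ‖f (s + τ) - f s‖ ^ p) ^ (1 / p) < ε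

/-- Bohr almost periodicity. -/
def BohrAP {X : Type*} [NormedAddCommGroup X] (f : ℝ → X) : Prop :=
  Continuous f ∧
  ∀ ε : ℝ, 0 < ε → ∃ l : ℝ, 0 < l ∧ ∀ a : ℝ, ∃ τ ∈ Set.Icc a (a + l),
    ∀ t : ℝ, ‖f (t + τ) - f t‖ < ε

/-- If `f` is Stepanov `p`-almost periodic and uniformly continuous, then `f`
is Bohr almost periodic. -/
theorem stepanovAP_uniformContinuous_implies_bohrAP
    {X : Type*} [NormedAddCommGroup X] [NormedSpace ℝ X] [CompleteSpace X]
    (p : ℝ) (hp : 1 ≤ p) (f : ℝ → X)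
    (hap : StepanovAP p f) (huc : UniformContinuous f) : BohrAP f := by
  have hp0 : (0 : ℝ) < p := lt_of_lt_of_le one_pos hp
  have hcont : Continuous f := huc.continuous
  refine ⟨hcont, fun ε hε => ?_⟩
  obtain ⟨δ, hδ0, hδ⟩ := Metric.uniformContinuous_iff.mp huc (ε / 3) (by linarith)
  set d : ℝ := min (δ / 2) 1 with hdd
  have hd0 : 0 < d := lt_min (by linarith) one_pos
  have hd1 : d ≤ 1 := min_le_right _ _
  have hdδ : d < δ := lt_of_le_of_lt (min_le_left _ _) (by linarith)
  set ε' : ℝ := d ^ (1 / p) * (ε / 3) with hε'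
  have hε'0 : 0 < ε' := mul_pos (Real.rpow_pos_of_pos hd0 _) (by linarith)
  obtain ⟨l, hl0, hl⟩ := hap ε' hε'0
  refine ⟨l, hl0, fun a => ?_⟩
  obtain ⟨τ, hτ, hτ'⟩ := hl a
  refine ⟨τ, hτ, fun t => ?_⟩
  by_contra hcon
  push_neg at hcon
  have key : ∀ s ∈ Set.Ioc t (t + d), (ε / 3 : ℝ) ≤ ‖f (s + τ) - f s‖ := by
    intro s hs
    have hst : dist s t < δ := by
      rw [Real.dist_eq, abs_of_nonneg (by linarith [hs.1])]
      linarith [hs.2]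
    have h1 : ‖f s - f t‖ < ε / 3 := by
      have := hδ hst; rwa [dist_eq_norm] at this
    have h2 : ‖f (s + τ) - f (t + τ)‖ < ε / 3 := by
      have hd' : dist (s + τ) (t + τ) < δ := by
        rw [Real.dist_eq]; rw [Real.dist_eq] at hst
        simpa using hst
      have := hδ hd'; rwa [dist_eq_norm] at this
    have h3 : ‖f (t + τ) - f t‖ ≤
        ‖f (t + τ) - f (s + τ)‖ + ‖f (s + τ) - f s‖ + ‖f s - f t‖ := by
      calc ‖f (t + τ) - f t‖
          = ‖(f (t + τ) - f (s + τ)) + (f (s + τ) - f s) + (f s - f t)‖ := by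
            congr 1; abel
        _ ≤ _ := norm_add₃_le
    rw [norm_sub_rev (f (t + τ)) (f (s + τ))] at h3
    linarith
  set g : ℝ → ℝ := fun s => ‖f (s + τ) - f s‖ ^ p with hg
  have hgcont : Continuous g := by
    apply Continuous.rpow_const
    · exact ((hcont.comp (continuous_id.add continuous_const)).sub hcont).norm
    · intro x; right; linarith
  have hgint : IntegrableOn g (Set.Ioc t (t + 1)) :=
    hgcont.integrableOn_Ioc
  have hsub : Set.Ioc t (t + d) ⊆ Set.Ioc t (t + 1) :=
    Set.Ioc_subset_Ioc le_rfl (by linarith)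
  have h4 : (ε / 3) ^ p * d ≤ ∫ s in Set.Ioc t (t + d), g s := by
    have hmeas : (volume (Set.Ioc t (t + d))).toReal = d := by
      rw [Real.volume_Ioc]
      simp [hd0.le]
    have := setIntegral_ge_of_const_le (measurableSet_Ioc)
      (by rw [Real.volume_Ioc]; exact ENNReal.ofReal_ne_top)
      (fun x hx => by
        have := key x hx
        exact Real.rpow_le_rpow (by linarith) this hp0.le)
      (hgint.mono_set hsub)
    change (volume (Set.Ioc t (t + d))).toReal • (ε / 3) ^ p ≤ _ at this
    rw [hmeas, smul_eq_mul, mul_comm] at this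
    exact this
  have h5 : ∫ s in Set.Ioc t (t + d), g s ≤ ∫ s in Set.Ioc t (t + 1), g s := by
    apply setIntegral_mono_set hgint
    · filter_upwards with x
      exact Real.rpow_nonneg (norm_nonneg _) p
    · exact Filter.Eventually.of_forall hsub
  have hint_nonneg : (0 : ℝ) ≤ ∫ s in Set.Ioc t (t + d), g s := by
    have : (0:ℝ) < (ε/3) ^ p * d :=
      mul_pos (Real.rpow_pos_of_pos (by linarith) _) hd0
    linarith
  have h6 : ((ε / 3) ^ p * d) ^ (1 / p) ≤
      (∫ s in Set.Ioc t (t + 1), g s) ^ (1 / p) :=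
    Real.rpow_le_rpow (by positivity) (le_trans h4 h5) (by positivity)
  have h7 : ((ε / 3) ^ p * d) ^ (1 / p) = ε' := by
    rw [Real.mul_rpow (Real.rpow_nonneg (by linarith) _) hd0.le,
      ← Real.rpow_mul (by linarith), mul_one_div, div_self hp0.ne',
      Real.rpow_one, hε']
    ring
  have := hτ' t
  rw [h7] at h6
  exact absurd (lt_of_le_of_lt h6 this) (lt_irrefl _)
end

section
/- A measurable function φ : ℝ × [0,1] → X is the Bochner transform of some f : ℝ → X (i.e. φ(t,s) = f(t+s)) if and only if φ(t+τ, s−τ) = φ(t,s) for all t ∈ ℝ, s ∈ [0,1] and τ ∈ [s−1, s]. -/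
open MeasureTheory Set

/-- A measurable function `φ : ℝ × [0,1] → X` is the Bochner transform of some
`f : ℝ → X` (i.e. `φ t s = f (t + s)` for `s ∈ [0,1]`) if and only if
`φ (t+τ) (s-τ) = φ t s` for all `t ∈ ℝ`, `s ∈ [0,1]` and `τ ∈ [s-1, s]`. -/
theorem bochner_transform_characterization
    {X : Type*} [NormedAddCommGroup X] [NormedSpace ℝ X] [CompleteSpace X]
    [MeasurableSpace X] (φ : ℝ → ℝ → X)
    (hmeas : Measurable (Function.uncurry φ)) :
    (∃ f : ℝ → X, ∀ t : ℝ, ∀ s ∈ Set.Icc (0 : ℝ) 1, φ t s = f (t + s)) ↔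
    (∀ t : ℝ, ∀ s ∈ Set.Icc (0 : ℝ) 1, ∀ τ ∈ Set.Icc (s - 1) s,
      φ (t + τ) (s - τ) = φ t s) := by
  constructor
  · rintro ⟨f, hf⟩ t s hs τ hτ
    rw [hf t s hs, hf (t + τ) (s - τ) ⟨by linarith [hτ.2], by linarith [hτ.1]⟩]
    ring_nf
  · intro h
    refine ⟨fun x => φ x 0, fun t s hs => ?_⟩
    have := h t s hs s ⟨by linarith [hs.2], le_refl s⟩
    simpa using this.symm
end

section
/- Let μ be a positive measure on ℝ with μ(ℝ) = ∞, finite on compact intervals, and satisfying condition (M). Then the space of Stepanov μ-ergodic functions of order p is translation invariant: if f is μ-S^p-ergodic then so is t ↦ f(t + a) for every a ∈ ℝ. -/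
open MeasureTheory Set Filter

/-- Condition (M): for every `τ` there exist `β > 0` and a bounded interval `I` such that
`μ(A + τ) ≤ β μ(A)` whenever `A` is Borel and disjoint from `I`. -/
def ConditionM (μ : Measure ℝ) : Prop :=
  ∀ τ : ℝ, ∃ β : ℝ, 0 < β ∧ ∃ a b : ℝ, ∀ A : Set ℝ, MeasurableSet A →
    A ∩ Set.Icc a b = ∅ → μ ((fun x => x + τ) '' A) ≤ ENNReal.ofReal β * μ A

/-- `f` is Stepanov `μ`-`S^p`-ergodic. -/
def StepanovErgodic {X : Type*} [NormedAddCommGroup X]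
    (μ : Measure ℝ) (p : ℝ) (f : ℝ → X) : Prop :=
  (∃ C : ℝ, ∀ t : ℝ, (∫ s in Set.Ioc t (t + 1), ‖f s‖ ^ p) ^ (1 / p) ≤ C) ∧
  Tendsto (fun r : ℝ =>
      (∫ t in Set.Icc (-r) r, (∫ s in Set.Ioc t (t + 1), ‖f s‖ ^ p) ^ (1 / p) ∂μ) /
        (μ (Set.Icc (-r) r)).toReal)
    atTop (nhds 0)

namespace StepanovAux

lemma integrableOn_window_cover {h : ℝ → ℝ} {t1 t2 : ℝ}
    (h1 : IntegrableOn h (Ioc t1 (t1 + 1)) volume)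
    (h2 : IntegrableOn h (Ioc t2 (t2 + 1)) volume)
    (h21 : t2 ≤ t1 + 1) :
    IntegrableOn h (Ioc t1 (t2 + 1)) volume := by
  refine (h1.union h2).mono_set fun s hs => ?_
  rcases le_or_gt s (t1 + 1) with hle | hgt
  · exact Or.inl ⟨hs.1, hle⟩
  · exact Or.inr ⟨lt_of_le_of_lt h21 hgt, hs.2⟩

lemma continuousOn_window {h : ℝ → ℝ} {t1 t2 : ℝ} (h12 : t1 ≤ t2)
    (hint : IntegrableOn h (Ioc t1 (t2 + 1)) volume) :
    ContinuousOn (fun t => ∫ s in Ioc t (t + 1), h s) (Icc t1 t2) := by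
  have hIcc : IntegrableOn h (Icc t1 (t2 + 1)) volume := by
    rwa [integrableOn_Icc_iff_integrableOn_Ioc]
  have hη : ContinuousOn (fun y => ∫ s in Ioc t1 y, h s) (Icc t1 (t2 + 1)) :=
    intervalIntegral.continuousOn_primitive hIcc
  have key : ∀ t ∈ Icc t1 t2,
      (∫ s in Ioc t (t + 1), h s) =
        (∫ s in Ioc t1 (t + 1), h s) - ∫ s in Ioc t1 t, h s := by
    intro t ht
    have hd : Disjoint (Ioc t1 t) (Ioc t (t + 1)) := Ioc_disjoint_Ioc_of_le le_rfl
    have hu : Ioc t1 t ∪ Ioc t (t + 1) = Ioc t1 (t + 1) :=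
      Ioc_union_Ioc_eq_Ioc ht.1 (by linarith)
    have hi1 : IntegrableOn h (Ioc t1 t) volume :=
      hint.mono_set (Ioc_subset_Ioc_right (by linarith [ht.2]))
    have hi2 : IntegrableOn h (Ioc t (t + 1)) volume :=
      hint.mono_set (Ioc_subset_Ioc ht.1 (by linarith [ht.2]))
    rw [← hu, MeasureTheory.setIntegral_union hd measurableSet_Ioc hi1 hi2]
    ring
  refine ContinuousOn.congr ?_ key
  refine ContinuousOn.sub ?_ (hη.mono (Icc_subset_Icc_right (by linarith)))
  refine hη.comp (continuous_add_right 1).continuousOn ?_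
  intro x hx
  simp only [mem_Icc] at hx ⊢
  constructor <;> linarith [hx.1, hx.2]

lemma measurable_window (h : ℝ → ℝ) :
    Measurable (fun t => ∫ s in Ioc t (t + 1), h s) := by
  set Φ : ℝ → ℝ := fun t => ∫ s in Ioc t (t + 1), h s with hΦdef
  set T : Set ℝ := {t : ℝ | IntegrableOn h (Ioc t (t + 1)) volume} with hTdef
  set S : ℤ → Set ℝ := fun n => T ∩ Icc ((n : ℝ) / 2) ((n : ℝ) / 2 + 1 / 2) with hSdef
  have hwin : ∀ {x y z : ℝ}, x ∈ T → y ∈ T → x ≤ z → z ≤ y → y ≤ x + 1 → z ∈ T := by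
    intro x y z hx hy hxz hzy hyx
    refine (integrableOn_window_cover hx hy hyx).mono_set fun s hs => ?_
    exact ⟨lt_of_le_of_lt hxz hs.1, hs.2.trans (by linarith)⟩
  have hwinS : ∀ n : ℤ, ∀ {x y : ℝ}, x ∈ S n → y ∈ S n → y ≤ x + 1 := by
    intro n x y hx hy
    have h1 := hx.2.1
    have h2 := hy.2.2
    linarith
  have hconv : ∀ n : ℤ, OrdConnected (S n) := by
    intro n
    constructor
    intro x hx y hy z hz
    exact ⟨hwin hx.1 hy.1 hz.1 hz.2 (hwinS n hx hy),
      hx.2.1.trans hz.1, hz.2.trans hy.2.2⟩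
  have hcover : T = ⋃ n : ℤ, S n := by
    ext t
    simp only [mem_iUnion, hSdef, mem_inter_iff, mem_Icc]
    constructor
    · intro ht
      refine ⟨⌊2 * t⌋, ht, ?_, ?_⟩
      · have := Int.floor_le (2 * t); linarith
      · have := Int.lt_floor_add_one (2 * t); linarith
    · rintro ⟨n, hn, _⟩; exact hn
  have hmeasS : ∀ n, MeasurableSet (S n) := fun n => (hconv n).measurableSet
  have hmeasT : MeasurableSet T := by
    rw [hcover]; exact MeasurableSet.iUnion hmeasS
  have hzero : ∀ t ∉ T, Φ t = 0 := fun t ht => integral_undef ht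
  have hcont : ∀ n : ℤ, ContinuousOn Φ (S n) := by
    intro n t ht
    obtain ⟨t1, w1, ht1S, ht1t, hw1, hW1⟩ :
        ∃ t1 w1, t1 ∈ S n ∧ t1 ≤ t ∧ w1 < t ∧ ∀ x ∈ S n, w1 < x → t1 ≤ x := by
      by_cases hdn : (S n ∩ Iio t).Nonempty
      · obtain ⟨u, huS, hu⟩ := hdn
        exact ⟨u, u, huS, hu.le, hu, fun x _ hx => hx.le⟩
      · exact ⟨t, t - 1, ht, le_rfl, by linarith,
          fun x hx _ => not_lt.1 fun hlt => hdn ⟨x, hx, hlt⟩⟩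
    obtain ⟨t2, w2, ht2S, htt2, hw2, hW2⟩ :
        ∃ t2 w2, t2 ∈ S n ∧ t ≤ t2 ∧ t < w2 ∧ ∀ x ∈ S n, x < w2 → x ≤ t2 := by
      by_cases hup : (S n ∩ Ioi t).Nonempty
      · obtain ⟨u, huS, hu⟩ := hup
        exact ⟨u, u, huS, hu.le, hu, fun x _ hx => hx.le⟩
      · exact ⟨t, t + 1, ht, le_rfl, by linarith,
          fun x hx _ => not_lt.1 fun hlt => hup ⟨x, hx, hlt⟩⟩
    have hco : ContinuousOn Φ (Icc t1 t2) :=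
      continuousOn_window (ht1t.trans htt2)
        (integrableOn_window_cover ht1S.1 ht2S.1 (hwinS n ht1S ht2S))
    have cwa : ContinuousWithinAt Φ (Icc t1 t2) t := hco t ⟨ht1t, htt2⟩
    refine cwa.mono_of_mem_nhdsWithin ?_
    refine mem_nhdsWithin.2 ⟨Ioo w1 w2, isOpen_Ioo, ⟨hw1, hw2⟩, ?_⟩
    rintro x ⟨hxW, hxS⟩
    exact ⟨hW1 x hxS hxW.1, hW2 x hxS hxW.2⟩
  -- conclude measurability
  apply measurable_of_isOpen
  intro U hU
  have hrepr : Φ ⁻¹' U = (Tᶜ ∩ Φ ⁻¹' U) ∪ ⋃ n : ℤ, (Φ ⁻¹' U ∩ S n) := by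
    ext x
    constructor
    · intro hx
      by_cases hxT : x ∈ T
      · right
        rw [hcover] at hxT
        obtain ⟨n, hn⟩ := mem_iUnion.1 hxT
        exact mem_iUnion.2 ⟨n, hx, hn⟩
      · exact Or.inl ⟨hxT, hx⟩
    · rintro (⟨_, hx⟩ | hx)
      · exact hx
      · obtain ⟨n, hn, _⟩ := mem_iUnion.1 hx
        exact hn
  rw [hrepr]
  refine MeasurableSet.union ?_ (MeasurableSet.iUnion fun n => ?_)
  · by_cases h0 : (0 : ℝ) ∈ U
    · have heq : Tᶜ ∩ Φ ⁻¹' U = Tᶜ := by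
        ext x
        simp only [mem_inter_iff, mem_compl_iff, mem_preimage, and_iff_left_iff_imp]
        intro hx
        rw [hzero x hx]
        exact h0
      rw [heq]
      exact hmeasT.compl
    · have heq : Tᶜ ∩ Φ ⁻¹' U = ∅ := by
        ext x
        simp only [mem_inter_iff, mem_compl_iff, mem_preimage, mem_empty_iff_false, iff_false,
          not_and]
        intro hx hc
        exact h0 (hzero x hx ▸ hc)
      rw [heq]
      exact MeasurableSet.empty
  · obtain ⟨V, hVopen, hVeq⟩ := continuousOn_iff'.1 (hcont n) U hU
    rw [hVeq]
    exact hVopen.measurableSet.inter (hmeasS n)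

lemma window_translate {X : Type*} [NormedAddCommGroup X]
    (f : ℝ → X) (p a t : ℝ) :
    (∫ s in Ioc t (t + 1), ‖f (s + a)‖ ^ p) =
      ∫ s in Ioc (t + a) (t + a + 1), ‖f s‖ ^ p := by
  have hmp : MeasurePreserving (fun x : ℝ => x + a) volume volume :=
    measurePreserving_add_right volume a
  have hemb : MeasurableEmbedding (fun x : ℝ => x + a) :=
    (MeasurableEquiv.addRight a).measurableEmbedding
  have hpre : (fun x : ℝ => x + a) ⁻¹' Ioc (t + a) (t + a + 1) = Ioc t (t + 1) := by
    ext x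
    simp only [mem_preimage, mem_Ioc]
    constructor <;> intro hx <;> exact ⟨by linarith [hx.1], by linarith [hx.2]⟩
  rw [← hpre, hmp.setIntegral_preimage_emb hemb (fun s => ‖f s‖ ^ p) _]

end StepanovAux

/-- If `μ ∈ 𝓜` satisfies condition (M), the space of Stepanov `μ`-ergodic functions of
order `p` is translation invariant. -/
theorem stepanovErgodic_translation_invariant
    {X : Type*} [NormedAddCommGroup X] [NormedSpace ℝ X] [CompleteSpace X]
    (p : ℝ) (hp : 1 ≤ p) (μ : Measure ℝ)
    (hμ_inf : μ Set.univ = ⊤) (hμ_fin : ∀ a b : ℝ, μ (Set.Icc a b) < ⊤)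
    (hM : ConditionM μ)
    (f : ℝ → X) (hf : StepanovErgodic μ p f) (a : ℝ) :
    StepanovErgodic μ p (fun t => f (t + a)) := by
  obtain ⟨⟨C, hC⟩, hQ⟩ := hf
  have hp0 : 0 < p := lt_of_lt_of_le one_pos hp
  set F : ℝ → ℝ := fun t => (∫ s in Ioc t (t + 1), ‖f s‖ ^ p) ^ (1 / p) with hFdef
  have hFmeas : Measurable F := by
    have h1 := StepanovAux.measurable_window (fun s => ‖f s‖ ^ p)
    have h2 : Continuous (fun x : ℝ => x ^ (1 / p)) :=
      Real.continuous_rpow_const (by positivity)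
    exact h2.measurable.comp h1
  have hFnn : ∀ t, 0 ≤ F t := fun t =>
    Real.rpow_nonneg (integral_nonneg fun s => Real.rpow_nonneg (norm_nonneg _) _) _
  have hFle : ∀ t, F t ≤ C := hC
  have hC0 : 0 ≤ C := le_trans (hFnn 0) (hFle 0)
  have hkey : ∀ t : ℝ, (∫ s in Ioc t (t + 1), ‖f (s + a)‖ ^ p) ^ (1 / p) = F (t + a) := by
    intro t
    simp only [hFdef]
    rw [StepanovAux.window_translate f p a t]
  constructor
  · refine ⟨C, fun t => ?_⟩
    show (∫ s in Ioc t (t + 1), ‖f (s + a)‖ ^ p) ^ (1 / p) ≤ C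
    rw [hkey t]
    exact hFle (t + a)
  -- main tendsto statement
  set D : ℝ → ℝ := fun r => (μ (Icc (-r) r)).toReal with hDdef
  have hDnn : ∀ r, 0 ≤ D r := fun r => ENNReal.toReal_nonneg
  have hDmono : ∀ {r R : ℝ}, r ≤ R → D r ≤ D R := by
    intro r R hrR
    exact ENNReal.toReal_mono (hμ_fin _ _).ne
      (measure_mono (Icc_subset_Icc (by linarith) hrR))
  have hDtop : Tendsto D atTop atTop := by
    rw [tendsto_atTop]
    intro b
    have hmono : Monotone (fun n : ℕ => Icc (-(n : ℝ)) (n : ℝ)) := by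
      intro m n hmn
      exact Icc_subset_Icc (neg_le_neg (Nat.cast_le.2 hmn)) (Nat.cast_le.2 hmn)
    have huniv : ⋃ n : ℕ, Icc (-(n : ℝ)) (n : ℝ) = univ := by
      ext x
      simp only [mem_iUnion, mem_Icc, mem_univ, iff_true]
      obtain ⟨n, hn⟩ := exists_nat_ge |x|
      exact ⟨n, by linarith [neg_abs_le x], by linarith [le_abs_self x]⟩
    obtain ⟨n, hn⟩ : ∃ n : ℕ, ENNReal.ofReal b < μ (Icc (-(n : ℝ)) (n : ℝ)) := by
      by_contra hcon
      push_neg at hcon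
      have hsup := Directed.measure_iUnion (μ := μ) hmono.directed_le
      rw [huniv, hμ_inf] at hsup
      have : (⊤ : ENNReal) ≤ ENNReal.ofReal b := hsup ▸ iSup_le hcon
      exact absurd (lt_of_le_of_lt this ENNReal.ofReal_lt_top) (lt_irrefl _)
    filter_upwards [eventually_ge_atTop ((n : ℝ))] with r hr
    have h1 : ENNReal.ofReal b ≤ μ (Icc (-r) r) :=
      le_trans hn.le (measure_mono (Icc_subset_Icc (by linarith) hr))
    have h2 : (ENNReal.ofReal b).toReal ≤ D r := ENNReal.toReal_mono (hμ_fin _ _).ne h1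
    rcases le_or_gt b 0 with hb | hb
    · exact le_trans hb (hDnn r)
    · rwa [ENNReal.toReal_ofReal hb.le] at h2
  -- condition (M) for τ = -a
  obtain ⟨β₁, hβ₁, c₁, d₁, hMa⟩ := hM (-a)
  set K : Set ℝ := Icc (c₁ - a) (d₁ - a) with hKdef
  have hKfin : μ K ≠ ⊤ := (hμ_fin _ _).ne
  have hM1 : ∀ W : Set ℝ, MeasurableSet W → W ∩ K = ∅ →
      μ W ≤ ENNReal.ofReal β₁ * μ ((fun x : ℝ => x - a) ⁻¹' W) := by
    intro W hW hWd
    have hA : MeasurableSet ((fun x : ℝ => x - a) ⁻¹' W) := (measurable_sub_const a) hW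
    have hdisj : ((fun x : ℝ => x - a) ⁻¹' W) ∩ Icc c₁ d₁ = ∅ := by
      rw [eq_empty_iff_forall_notMem]
      rintro x ⟨hxW, hx1, hx2⟩
      have hmem : x - a ∈ W ∩ K := ⟨hxW, by rw [hKdef]; exact ⟨by linarith, by linarith⟩⟩
      rw [hWd] at hmem
      exact hmem
    have himg : (fun x : ℝ => x + (-a)) '' ((fun x : ℝ => x - a) ⁻¹' W) = W := by
      ext x
      simp only [mem_image, mem_preimage]
      constructor
      · rintro ⟨y, hy, rfl⟩
        simpa [← sub_eq_add_neg] using hy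
      · intro hx
        exact ⟨x + a, by simpa using hx, by ring⟩
    have := hMa _ hA hdisj
    rwa [himg] at this
  -- doubling estimate
  obtain ⟨β₂, hβ₂, c₂, d₂, hMb⟩ := hM |a|
  obtain ⟨β₃, hβ₃, c₃, d₃, hMc⟩ := hM (-|a|)
  set c : ℝ := β₂ + β₃ + 1 with hcdef
  have hc : 0 < c := by linarith
  have hdb : ∀ᶠ r : ℝ in atTop, D (r + |a|) ≤ c * D r := by
    filter_upwards [eventually_ge_atTop (d₂ + |a| + 1), eventually_ge_atTop (|a| - c₃ + 1),
      eventually_ge_atTop |a|] with r hr1 hr2 hr3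
    have habs : 0 ≤ |a| := abs_nonneg a
    have hright : μ (Icc r (r + |a|)) ≤ ENNReal.ofReal β₂ * μ (Icc (-r) r) := by
      have hdisj : Icc (r - |a|) r ∩ Icc c₂ d₂ = ∅ := by
        rw [eq_empty_iff_forall_notMem]
        rintro x ⟨⟨hx1, _⟩, _, hx4⟩
        linarith
      have himg : (fun x : ℝ => x + |a|) '' Icc (r - |a|) r = Icc r (r + |a|) := by
        ext x
        simp only [mem_image, mem_Icc]
        constructor
        · rintro ⟨y, hy, rfl⟩
          exact ⟨by linarith [hy.1], by linarith [hy.2]⟩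
        · intro hx
          exact ⟨x - |a|, ⟨by linarith [hx.1], by linarith [hx.2]⟩, by ring⟩
      calc μ (Icc r (r + |a|)) = μ ((fun x : ℝ => x + |a|) '' Icc (r - |a|) r) := by rw [himg]
        _ ≤ ENNReal.ofReal β₂ * μ (Icc (r - |a|) r) := hMb _ measurableSet_Icc hdisj
        _ ≤ ENNReal.ofReal β₂ * μ (Icc (-r) r) :=
            mul_le_mul_right (measure_mono (Icc_subset_Icc (by linarith) le_rfl)) _
    have hleft : μ (Icc (-(r + |a|)) (-r)) ≤ ENNReal.ofReal β₃ * μ (Icc (-r) r) := by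
      have hdisj : Icc (-r) (-r + |a|) ∩ Icc c₃ d₃ = ∅ := by
        rw [eq_empty_iff_forall_notMem]
        rintro x ⟨⟨_, hx2⟩, hx3, _⟩
        linarith
      have himg : (fun x : ℝ => x + (-|a|)) '' Icc (-r) (-r + |a|) = Icc (-(r + |a|)) (-r) := by
        ext x
        simp only [mem_image, mem_Icc]
        constructor
        · rintro ⟨y, hy, rfl⟩
          exact ⟨by linarith [hy.1], by linarith [hy.2]⟩
        · intro hx
          exact ⟨x + |a|, ⟨by linarith [hx.1], by linarith [hx.2]⟩, by ring⟩
      calc μ (Icc (-(r + |a|)) (-r))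
          = μ ((fun x : ℝ => x + (-|a|)) '' Icc (-r) (-r + |a|)) := by rw [himg]
        _ ≤ ENNReal.ofReal β₃ * μ (Icc (-r) (-r + |a|)) := hMc _ measurableSet_Icc hdisj
        _ ≤ ENNReal.ofReal β₃ * μ (Icc (-r) r) :=
            mul_le_mul_right (measure_mono (Icc_subset_Icc le_rfl (by linarith))) _
    have hcover : Icc (-(r + |a|)) (r + |a|) ⊆
        Icc (-(r + |a|)) (-r) ∪ (Icc (-r) r ∪ Icc r (r + |a|)) := by
      intro x hx
      rcases le_or_gt x (-r) with h | h
      · exact Or.inl ⟨hx.1, h⟩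
      rcases le_or_gt x r with h' | h'
      · exact Or.inr (Or.inl ⟨h.le, h'⟩)
      · exact Or.inr (Or.inr ⟨h'.le, hx.2⟩)
    have htot : μ (Icc (-(r + |a|)) (r + |a|)) ≤ ENNReal.ofReal c * μ (Icc (-r) r) := by
      refine le_trans (measure_mono hcover) ?_
      refine le_trans (measure_union_le _ _) ?_
      refine le_trans (add_le_add hleft (le_trans (measure_union_le _ _)
        (add_le_add le_rfl hright))) ?_
      have hofc : ENNReal.ofReal c = ENNReal.ofReal β₃ + (1 + ENNReal.ofReal β₂) := by
        rw [hcdef]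
        rw [show β₂ + β₃ + 1 = β₃ + (1 + β₂) by ring]
        rw [ENNReal.ofReal_add (by linarith) (by linarith),
          ENNReal.ofReal_add (by norm_num) (by linarith), ENNReal.ofReal_one]
      rw [hofc, add_mul, add_mul, one_mul]
    have hfinr : μ (Icc (-r) r) ≠ ⊤ := (hμ_fin _ _).ne
    have := ENNReal.toReal_mono
      (ENNReal.mul_lt_top ENNReal.ofReal_lt_top (hμ_fin (-r) r)).ne htot
    rw [ENNReal.toReal_mul, ENNReal.toReal_ofReal hc.le] at this
    exact this
  -- translation lemma for lintegrals
  have hFmeas' : Measurable fun t : ℝ => ENNReal.ofReal (F t) := hFmeas.ennreal_ofReal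
  have hlemA : ∀ B : Set ℝ, MeasurableSet B → B ∩ K = ∅ →
      (∫⁻ t in B, ENNReal.ofReal (F (t + a)) ∂μ) ≤
        ENNReal.ofReal β₁ * ∫⁻ t in (fun x : ℝ => x - a) ⁻¹' B, ENNReal.ofReal (F t) ∂μ := by
    intro B hB hBK
    have hmeq : (∫⁻ t in B, ENNReal.ofReal (F (t + a)) ∂μ) =
        ∫⁻ x, ENNReal.ofReal (F x) ∂(Measure.map (fun t : ℝ => t + a) (μ.restrict B)) := by
      rw [lintegral_map hFmeas' (measurable_add_const a)]
    rw [hmeq]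
    have hle : Measure.map (fun t : ℝ => t + a) (μ.restrict B) ≤
        ENNReal.ofReal β₁ • μ.restrict ((fun x : ℝ => x - a) ⁻¹' B) := by
      refine Measure.le_iff.2 fun s hs => ?_
      rw [Measure.map_apply (measurable_add_const a) hs,
        Measure.restrict_apply ((measurable_add_const a) hs)]
      have hVmeas : MeasurableSet ((fun t : ℝ => t + a) ⁻¹' s ∩ B) :=
        ((measurable_add_const a) hs).inter hB
      have hVK : ((fun t : ℝ => t + a) ⁻¹' s ∩ B) ∩ K = ∅ := by
        rw [eq_empty_iff_forall_notMem]
        rintro x ⟨⟨_, hxB⟩, hxK⟩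
        rw [eq_empty_iff_forall_notMem] at hBK
        exact hBK x ⟨hxB, hxK⟩
      have hsub : (fun x : ℝ => x - a) ⁻¹' ((fun t : ℝ => t + a) ⁻¹' s ∩ B) =
          s ∩ ((fun x : ℝ => x - a) ⁻¹' B) := by
        ext x
        simp only [mem_preimage, mem_inter_iff]
        constructor
        · rintro ⟨h1, h2⟩
          exact ⟨by simpa using h1, h2⟩
        · rintro ⟨h1, h2⟩
          exact ⟨by simpa using h1, h2⟩
      have hres := hM1 _ hVmeas hVK
      rw [hsub] at hres
      refine hres.trans ?_
      rw [Measure.smul_apply, smul_eq_mul, Measure.restrict_apply hs]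
    calc ∫⁻ x, ENNReal.ofReal (F x) ∂(Measure.map (fun t : ℝ => t + a) (μ.restrict B))
        ≤ ∫⁻ x, ENNReal.ofReal (F x)
            ∂(ENNReal.ofReal β₁ • μ.restrict ((fun x : ℝ => x - a) ⁻¹' B)) :=
          lintegral_mono' hle le_rfl
      _ = ENNReal.ofReal β₁ * ∫⁻ t in (fun x : ℝ => x - a) ⁻¹' B, ENNReal.ofReal (F t) ∂μ :=
          lintegral_smul_measure _ _
  -- composed hypothesis limit
  have hQa : Tendsto (fun r : ℝ =>
      (∫ t in Icc (-(r + |a|)) (r + |a|), F t ∂μ) / D (r + |a|)) atTop (nhds 0) := by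
    have htr : Tendsto (fun r : ℝ => r + |a|) atTop atTop :=
      tendsto_atTop_add_const_right _ _ tendsto_id
    exact hQ.comp htr
  -- limit of bound function
  have hb0 : Tendsto (fun r : ℝ => C * (μ K).toReal / D r +
      β₁ * c * ((∫ t in Icc (-(r + |a|)) (r + |a|), F t ∂μ) / D (r + |a|)))
      atTop (nhds 0) := by
    have h1 : Tendsto (fun r : ℝ => C * (μ K).toReal / D r) atTop (nhds 0) :=
      Filter.Tendsto.div_atTop tendsto_const_nhds hDtop
    have h2 := hQa.const_mul (β₁ * c)
    simpa using h1.add h2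
  refine squeeze_zero' ?_ ?_ hb0
  · filter_upwards with r
    refine div_nonneg (integral_nonneg fun t => ?_) ENNReal.toReal_nonneg
    exact Real.rpow_nonneg (integral_nonneg fun s => Real.rpow_nonneg (norm_nonneg _) _) _
  · filter_upwards [hdb, hDtop.eventually_ge_atTop 1] with r hdbr hDr1
    have habs : 0 ≤ |a| := abs_nonneg a
    have hDrpos : 0 < D r := lt_of_lt_of_le one_pos hDr1
    have hDRpos : 0 < D (r + |a|) := lt_of_lt_of_le hDrpos (hDmono (by linarith))
    show (∫ t in Icc (-r) r, (∫ s in Ioc t (t + 1), ‖f (s + a)‖ ^ p) ^ (1 / p) ∂μ) / D r ≤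
      C * (μ K).toReal / D r +
        β₁ * c * ((∫ t in Icc (-(r + |a|)) (r + |a|), F t ∂μ) / D (r + |a|))
    -- convert numerator to a lintegral
    have hnum_eq : (∫ t in Icc (-r) r, (∫ s in Ioc t (t + 1), ‖f (s + a)‖ ^ p) ^ (1 / p) ∂μ) =
        (∫⁻ t in Icc (-r) r, ENNReal.ofReal (F (t + a)) ∂μ).toReal := by
      rw [integral_eq_lintegral_of_nonneg_ae]
      · congr 1
        refine lintegral_congr fun t => ?_
        rw [hkey t]
      · exact ae_of_all _ fun t =>
          Real.rpow_nonneg (integral_nonneg fun s => Real.rpow_nonneg (norm_nonneg _) _) _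
      · have heq : (fun t : ℝ => (∫ s in Ioc t (t + 1), ‖f (s + a)‖ ^ p) ^ (1 / p)) =
            fun t => F (t + a) := funext hkey
        rw [heq]
        exact (hFmeas.comp (measurable_add_const a)).aestronglyMeasurable
    have hnumR_eq : (∫ t in Icc (-(r + |a|)) (r + |a|), F t ∂μ) =
        (∫⁻ t in Icc (-(r + |a|)) (r + |a|), ENNReal.ofReal (F t) ∂μ).toReal := by
      rw [integral_eq_lintegral_of_nonneg_ae (ae_of_all _ hFnn)
        hFmeas.aestronglyMeasurable.restrict]
    have hfinR : (∫⁻ t in Icc (-(r + |a|)) (r + |a|), ENNReal.ofReal (F t) ∂μ) ≠ ⊤ := by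
      have hle : (∫⁻ t in Icc (-(r + |a|)) (r + |a|), ENNReal.ofReal (F t) ∂μ) ≤
          ENNReal.ofReal C * μ (Icc (-(r + |a|)) (r + |a|)) := by
        calc (∫⁻ t in Icc (-(r + |a|)) (r + |a|), ENNReal.ofReal (F t) ∂μ)
            ≤ ∫⁻ _ in Icc (-(r + |a|)) (r + |a|), ENNReal.ofReal C ∂μ :=
              lintegral_mono fun t => ENNReal.ofReal_le_ofReal (hFle t)
          _ = ENNReal.ofReal C * μ (Icc (-(r + |a|)) (r + |a|)) := setLIntegral_const _ _
      exact (lt_of_le_of_lt hle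
        (ENNReal.mul_lt_top ENNReal.ofReal_lt_top (hμ_fin _ _))).ne
    -- split the lintegral
    have hBmeas : MeasurableSet (Icc (-r) r \ K) := measurableSet_Icc.diff measurableSet_Icc
    have hBK : (Icc (-r) r \ K) ∩ K = ∅ := by
      rw [eq_empty_iff_forall_notMem]
      rintro x ⟨⟨_, hxK⟩, hxK'⟩
      exact hxK hxK'
    have hEsub : (fun x : ℝ => x - a) ⁻¹' (Icc (-r) r \ K) ⊆ Icc (-(r + |a|)) (r + |a|) := by
      intro x hx
      have h1 : -r ≤ x - a := hx.1.1
      have h2 : x - a ≤ r := hx.1.2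
      exact ⟨by linarith [le_abs_self a, neg_abs_le a], by linarith [le_abs_self a, neg_abs_le a]⟩
    have hlint_split : (∫⁻ t in Icc (-r) r, ENNReal.ofReal (F (t + a)) ∂μ) ≤
        ENNReal.ofReal C * μ K +
          ENNReal.ofReal β₁ * ∫⁻ t in Icc (-(r + |a|)) (r + |a|), ENNReal.ofReal (F t) ∂μ := by
      have hsplit : Icc (-r) r = (Icc (-r) r ∩ K) ∪ (Icc (-r) r \ K) :=
        (inter_union_diff _ _).symm
      calc ∫⁻ t in Icc (-r) r, ENNReal.ofReal (F (t + a)) ∂μ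
          = ∫⁻ t in (Icc (-r) r ∩ K) ∪ (Icc (-r) r \ K), ENNReal.ofReal (F (t + a)) ∂μ := by
            rw [← hsplit]
        _ ≤ (∫⁻ t in Icc (-r) r ∩ K, ENNReal.ofReal (F (t + a)) ∂μ) +
            ∫⁻ t in Icc (-r) r \ K, ENNReal.ofReal (F (t + a)) ∂μ := lintegral_union_le _ _ _
        _ ≤ ENNReal.ofReal C * μ K +
            ENNReal.ofReal β₁ * ∫⁻ t in Icc (-(r + |a|)) (r + |a|), ENNReal.ofReal (F t) ∂μ := by
            refine add_le_add ?_ ?_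
            · calc ∫⁻ t in Icc (-r) r ∩ K, ENNReal.ofReal (F (t + a)) ∂μ
                  ≤ ∫⁻ _ in Icc (-r) r ∩ K, ENNReal.ofReal C ∂μ :=
                    lintegral_mono fun t => ENNReal.ofReal_le_ofReal (hFle (t + a))
                _ = ENNReal.ofReal C * μ (Icc (-r) r ∩ K) := setLIntegral_const _ _
                _ ≤ ENNReal.ofReal C * μ K :=
                    mul_le_mul_right (measure_mono inter_subset_right) _
            · refine le_trans (hlemA _ hBmeas hBK) ?_
              exact mul_le_mul_right (lintegral_mono_set hEsub) _
    -- put everything together in ℝ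
    have hnum_le : (∫⁻ t in Icc (-r) r, ENNReal.ofReal (F (t + a)) ∂μ).toReal ≤
        C * (μ K).toReal + β₁ * (∫ t in Icc (-(r + |a|)) (r + |a|), F t ∂μ) := by
      have hne : ENNReal.ofReal C * μ K +
          ENNReal.ofReal β₁ * (∫⁻ t in Icc (-(r + |a|)) (r + |a|), ENNReal.ofReal (F t) ∂μ)
            ≠ ⊤ := by
        refine ENNReal.add_ne_top.2 ⟨?_, ?_⟩
        · exact (ENNReal.mul_lt_top ENNReal.ofReal_lt_top (lt_top_iff_ne_top.2 hKfin)).ne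
        · exact (ENNReal.mul_lt_top ENNReal.ofReal_lt_top (lt_top_iff_ne_top.2 hfinR)).ne
      refine le_trans (ENNReal.toReal_mono hne hlint_split) ?_
      rw [ENNReal.toReal_add, ENNReal.toReal_mul, ENNReal.toReal_mul,
        ENNReal.toReal_ofReal hC0, ENNReal.toReal_ofReal hβ₁.le, hnumR_eq]
      · exact (ENNReal.mul_lt_top ENNReal.ofReal_lt_top (lt_top_iff_ne_top.2 hKfin)).ne
      · exact (ENNReal.mul_lt_top ENNReal.ofReal_lt_top (lt_top_iff_ne_top.2 hfinR)).ne
    have hQRnn : 0 ≤ (∫ t in Icc (-(r + |a|)) (r + |a|), F t ∂μ) :=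
      integral_nonneg fun t => hFnn t
    set NfR := (∫ t in Icc (-(r + |a|)) (r + |a|), F t ∂μ) with hNfRdef
    calc (∫ t in Icc (-r) r, (∫ s in Ioc t (t + 1), ‖f (s + a)‖ ^ p) ^ (1 / p) ∂μ) / D r
        = (∫⁻ t in Icc (-r) r, ENNReal.ofReal (F (t + a)) ∂μ).toReal / D r := by rw [hnum_eq]
      _ ≤ (C * (μ K).toReal + β₁ * NfR) / D r := (div_le_div_iff_of_pos_right hDrpos).2 hnum_le
      _ = C * (μ K).toReal / D r + β₁ * NfR / D r := add_div _ _ _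
      _ ≤ C * (μ K).toReal / D r + β₁ * c * (NfR / D (r + |a|)) := by
          refine add_le_add le_rfl ?_
          have h1 : NfR / D r ≤ c * NfR / D (r + |a|) := by
            rw [div_le_div_iff₀ hDrpos hDRpos]
            calc NfR * D (r + |a|) ≤ NfR * (c * D r) := mul_le_mul_of_nonneg_left hdbr hQRnn
              _ = c * NfR * D r := by ring
          calc β₁ * NfR / D r = β₁ * (NfR / D r) := by ring
            _ ≤ β₁ * (c * NfR / D (r + |a|)) := mul_le_mul_of_nonneg_left h1 hβ₁.le
            _ = β₁ * c * (NfR / D (r + |a|)) := by ring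
end

section
/- Let μ ∈ 𝓜 satisfy condition (M) and 1 ≤ p < ∞. Then every μ-ergodic bounded continuous function f : ℝ → X is Stepanov μ-ergodic of order p; that is, 𝓔(ℝ,X,μ) ⊆ 𝓔^p(ℝ,X,μ). -/
open MeasureTheory Set Filter

/-- Bounded a.e.-strongly-measurable functions are integrable on sets of finite measure. -/
lemma aux_integrableOn (μ : Measure ℝ) {A : Set ℝ} (hA : μ A < ⊤) {h : ℝ → ℝ}
    (hm : AEStronglyMeasurable h (μ.restrict A)) {C : ℝ} (hb : ∀ x, |h x| ≤ C) :
    IntegrableOn h A μ :=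
  Integrable.mono' ((integrableOn_const_iff).mpr (Or.inr hA)) hm
    (Filter.Eventually.of_forall fun x => by simpa using hb x)

/-- The measure of `[-r, r]` tends to infinity. -/
lemma aux_mtop (μ : Measure ℝ) (hμ_inf : μ Set.univ = ⊤)
    (hμ_fin : ∀ a b : ℝ, μ (Set.Icc a b) < ⊤) :
    Tendsto (fun r : ℝ => (μ (Set.Icc (-r) r)).toReal) atTop atTop := by
  rw [tendsto_atTop]
  intro b
  have hU : (⋃ n : ℕ, Set.Icc (-(n : ℝ)) n) = Set.univ := by
    ext x
    simp only [mem_iUnion, mem_univ, iff_true, mem_Icc]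
    obtain ⟨n, hn⟩ := exists_nat_ge |x|
    exact ⟨n, by constructor <;> [linarith [neg_abs_le x]; linarith [le_abs_self x]]⟩
  have hmono : Monotone fun n : ℕ => Set.Icc (-(n : ℝ)) n := by
    intro m n hmn
    have : (m : ℝ) ≤ n := Nat.cast_le.mpr hmn
    exact Set.Icc_subset_Icc (by linarith) this
  have hsup : (⨆ n : ℕ, μ (Set.Icc (-(n : ℝ)) n)) = ⊤ := by
    rw [← hmono.measure_iUnion, hU, hμ_inf]
  obtain ⟨n, hn⟩ := lt_iSup_iff.mp (by rw [hsup]; exact ENNReal.ofReal_lt_top :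
    ENNReal.ofReal b < ⨆ n : ℕ, μ (Set.Icc (-(n : ℝ)) n))
  refine eventually_atTop.mpr ⟨n, fun r hr => ?_⟩
  have hsub : Set.Icc (-(n : ℝ)) n ⊆ Set.Icc (-r) r := Set.Icc_subset_Icc (by linarith) hr
  have h1 : ENNReal.ofReal b ≤ μ (Set.Icc (-r) r) := le_trans hn.le (measure_mono hsub)
  calc b ≤ (ENNReal.ofReal b).toReal := by
        rw [ENNReal.toReal_ofReal']; exact le_max_left _ _
      _ ≤ (μ (Set.Icc (-r) r)).toReal :=
        ENNReal.toReal_mono (hμ_fin _ _).ne h1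

/-- Under condition (M), the measure of `[-(r+c), r+c]` is eventually dominated by a constant
multiple of the measure of `[-r, r]`. -/
lemma aux_ratio (μ : Measure ℝ) (hμ_fin : ∀ a b : ℝ, μ (Set.Icc a b) < ⊤)
    (hM : ConditionM μ) (c : ℝ) (hc : 0 ≤ c) :
    ∃ C : ℝ, 0 < C ∧ ∀ᶠ r : ℝ in atTop,
      (μ (Set.Icc (-(r + c)) (r + c))).toReal ≤ C * (μ (Set.Icc (-r) r)).toReal := by
  obtain ⟨β₁, hβ₁, a₁, b₁, hP₁⟩ := hM c
  obtain ⟨β₂, hβ₂, a₂, b₂, hP₂⟩ := hM (-c)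
  refine ⟨1 + β₁ + β₂, by linarith, ?_⟩
  filter_upwards [eventually_ge_atTop (max c (max (b₁ + c + 1) (c - a₂ + 1)))] with r hr
  have hrc : c ≤ r := le_trans (le_max_left _ _) hr
  have hrb : b₁ + c + 1 ≤ r := le_trans (le_trans (le_max_left _ _) (le_max_right _ _)) hr
  have hra : c - a₂ + 1 ≤ r := le_trans (le_trans (le_max_right _ _) (le_max_right _ _)) hr
  have hsub : Set.Icc (-(r + c)) (r + c) ⊆
      Set.Icc (-r) r ∪ (Set.Icc r (r + c) ∪ Set.Icc (-r - c) (-r)) := by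
    intro x hx
    simp only [mem_Icc] at hx
    rcases le_or_gt x r with h1 | h1
    · rcases le_or_gt (-r) x with h2 | h2
      · exact Or.inl ⟨h2, h1⟩
      · exact Or.inr (Or.inr ⟨by linarith [hx.1], h2.le⟩)
    · exact Or.inr (Or.inl ⟨h1.le, hx.2⟩)
  have himg1 : (fun x => x + c) '' Set.Icc (r - c) r = Set.Icc r (r + c) := by
    rw [Set.image_add_const_Icc]; congr 1; ring
  have himg2 : (fun x => x + -c) '' Set.Icc (-r) (-r + c) = Set.Icc (-r - c) (-r) := by
    rw [Set.image_add_const_Icc]; congr 1 <;> ring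
  have h1 : μ (Set.Icc r (r + c)) ≤ ENNReal.ofReal β₁ * μ (Set.Icc (-r) r) := by
    rw [← himg1]
    refine le_trans (hP₁ _ measurableSet_Icc ?_) ?_
    · apply Set.eq_empty_iff_forall_notMem.mpr
      rintro x ⟨⟨hx1, _⟩, ⟨_, hx4⟩⟩
      linarith
    · exact mul_le_mul_right (measure_mono (Set.Icc_subset_Icc (by linarith) le_rfl)) _
  have h2 : μ (Set.Icc (-r - c) (-r)) ≤ ENNReal.ofReal β₂ * μ (Set.Icc (-r) r) := by
    rw [← himg2]
    refine le_trans (hP₂ _ measurableSet_Icc ?_) ?_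
    · apply Set.eq_empty_iff_forall_notMem.mpr
      rintro x ⟨⟨_, hx2⟩, ⟨hx3, _⟩⟩
      linarith
    · exact mul_le_mul_right (measure_mono (Set.Icc_subset_Icc le_rfl (by linarith))) _
  have hmeas : μ (Set.Icc (-(r + c)) (r + c)) ≤
      ENNReal.ofReal (1 + β₁ + β₂) * μ (Set.Icc (-r) r) := by
    calc μ (Set.Icc (-(r + c)) (r + c))
        ≤ μ (Set.Icc (-r) r ∪ (Set.Icc r (r + c) ∪ Set.Icc (-r - c) (-r))) :=
          measure_mono hsub
      _ ≤ μ (Set.Icc (-r) r) + (μ (Set.Icc r (r + c)) + μ (Set.Icc (-r - c) (-r))) :=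
          le_trans (measure_union_le _ _) (by gcongr; exact measure_union_le _ _)
      _ ≤ μ (Set.Icc (-r) r) + (ENNReal.ofReal β₁ * μ (Set.Icc (-r) r) +
            ENNReal.ofReal β₂ * μ (Set.Icc (-r) r)) := by gcongr
      _ = (1 + ENNReal.ofReal β₁ + ENNReal.ofReal β₂) * μ (Set.Icc (-r) r) := by ring
      _ = ENNReal.ofReal (1 + β₁ + β₂) * μ (Set.Icc (-r) r) := by
          rw [ENNReal.ofReal_add (by linarith) hβ₂.le, ENNReal.ofReal_add zero_le_one hβ₁.le,
            ENNReal.ofReal_one]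
  calc (μ (Set.Icc (-(r + c)) (r + c))).toReal
      ≤ (ENNReal.ofReal (1 + β₁ + β₂) * μ (Set.Icc (-r) r)).toReal := by
        refine ENNReal.toReal_mono ?_ hmeas
        exact ENNReal.mul_ne_top ENNReal.ofReal_ne_top (hμ_fin _ _).ne
    _ = (1 + β₁ + β₂) * (μ (Set.Icc (-r) r)).toReal := by
        rw [ENNReal.toReal_mul, ENNReal.toReal_ofReal (by linarith)]

/-- Each translate of a `μ`-ergodic bounded continuous function is again `μ`-ergodic. -/
lemma aux_shift {X : Type*} [NormedAddCommGroup X] (μ : Measure ℝ)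
    (hμ_inf : μ Set.univ = ⊤) (hμ_fin : ∀ a b : ℝ, μ (Set.Icc a b) < ⊤)
    (hM : ConditionM μ) (f : ℝ → X) (hcont : Continuous f)
    {M : ℝ} (hM0 : 0 ≤ M) (hMf : ∀ t, ‖f t‖ ≤ M)
    (herg : Tendsto (fun r : ℝ =>
        (∫ t in Set.Icc (-r) r, ‖f t‖ ∂μ) / (μ (Set.Icc (-r) r)).toReal)
      atTop (nhds 0)) (s : ℝ) :
    Tendsto (fun r : ℝ =>
        (∫ t in Set.Icc (-r) r, ‖f (t + s)‖ ∂μ) / (μ (Set.Icc (-r) r)).toReal)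
      atTop (nhds 0) := by
  have hmtop := aux_mtop μ hμ_inf hμ_fin
  obtain ⟨β, hβ, a, b, hP⟩ := hM (-s)
  set J : Set ℝ := Set.Icc (a - s) (b - s) with hJ
  have hμJ : μ J < ⊤ := hμ_fin _ _
  -- the key consequence of condition (M) in the useful direction
  have key : ∀ C : Set ℝ, MeasurableSet C → C ∩ J = ∅ →
      μ C ≤ ENNReal.ofReal β * μ ((fun x => x + s) '' C) := by
    intro C hC hCJ
    have himg : (fun x => x + -s) '' ((fun x => x + s) '' C) = C := by
      rw [Set.image_image]
      simp
    have hmeasC : MeasurableSet ((fun x => x + s) '' C) := by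
      rw [Set.image_add_right]
      exact hC.preimage (measurable_add_const _)
    have hdisj : ((fun x => x + s) '' C) ∩ Set.Icc a b = ∅ := by
      apply Set.eq_empty_iff_forall_notMem.mpr
      rintro y ⟨⟨x, hxC, rfl⟩, hy2⟩
      simp only [mem_Icc] at hy2
      have : x ∈ C ∩ J := ⟨hxC, by simp only [hJ, mem_Icc]; constructor <;> linarith⟩
      rw [hCJ] at this
      exact this
    calc μ C = μ ((fun x => x + -s) '' ((fun x => x + s) '' C)) := by rw [himg]
      _ ≤ ENNReal.ofReal β * μ ((fun x => x + s) '' C) := hP _ hmeasC hdisj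
  -- integrability facts
  have hintOn : ∀ A : Set ℝ, μ A < ⊤ → IntegrableOn (fun u => ‖f u‖) A μ :=
    fun A hA => aux_integrableOn μ hA hcont.norm.aestronglyMeasurable.restrict
      (fun x => by simpa [abs_of_nonneg (norm_nonneg (f x))] using hMf x)
  have hintOn' : ∀ A : Set ℝ, μ A < ⊤ → IntegrableOn (fun t => ‖f (t + s)‖) A μ :=
    fun A hA => aux_integrableOn μ hA
      ((hcont.comp (continuous_add_right s)).norm.aestronglyMeasurable.restrict)
      (fun x => by simpa [abs_of_nonneg (norm_nonneg (f (x + s)))] using hMf (x + s))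
  -- the main pointwise estimate, valid for every r
  have est : ∀ r : ℝ, ∫ t in Set.Icc (-r) r, ‖f (t + s)‖ ∂μ ≤
      M * (μ J).toReal + β * ∫ u in Set.Icc (-(r + |s|)) (r + |s|), ‖f u‖ ∂μ := by
    intro r
    set A : Set ℝ := Set.Icc (-r) r \ J with hA
    have hAm : MeasurableSet A := measurableSet_Icc.diff measurableSet_Icc
    have hμIr : μ (Set.Icc (-r) r) < ⊤ := hμ_fin _ _
    have hμA : μ A < ⊤ := lt_of_le_of_lt (measure_mono Set.diff_subset) hμIr
    set A' : Set ℝ := (fun x => x + s) '' A with hA'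
    have hA'm : MeasurableSet A' := by
      rw [hA', Set.image_add_right]
      exact hAm.preimage (measurable_add_const _)
    have hA'sub : A' ⊆ Set.Icc (-(r + |s|)) (r + |s|) := by
      rintro y ⟨x, hx, rfl⟩
      have hx' : x ∈ Set.Icc (-r) r := hx.1
      simp only [mem_Icc] at hx' ⊢
      constructor
      · linarith [neg_abs_le s, hx'.1]
      · linarith [le_abs_self s, hx'.2]
    have hμA' : μ A' < ⊤ := lt_of_le_of_lt (measure_mono hA'sub) (hμ_fin _ _)
    -- split the integral
    have hsplit : ∫ t in Set.Icc (-r) r, ‖f (t + s)‖ ∂μ =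
        (∫ t in Set.Icc (-r) r ∩ J, ‖f (t + s)‖ ∂μ) + ∫ t in A, ‖f (t + s)‖ ∂μ := by
      rw [← setIntegral_union]
      · rw [Set.inter_union_diff]
      · exact disjoint_sdiff_self_right.mono_left Set.inter_subset_right
      · exact hAm
      · exact (hintOn' _ (lt_of_le_of_lt (measure_mono Set.inter_subset_left) hμIr))
      · exact hintOn' _ hμA
    -- first piece
    have hpiece1 : ∫ t in Set.Icc (-r) r ∩ J, ‖f (t + s)‖ ∂μ ≤ M * (μ J).toReal := by
      have h1 : ‖∫ t in Set.Icc (-r) r ∩ J, ‖f (t + s)‖ ∂μ‖ ≤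
          M * (μ (Set.Icc (-r) r ∩ J)).toReal := by
        refine norm_setIntegral_le_of_norm_le_const
          (lt_of_le_of_lt (measure_mono Set.inter_subset_left) hμIr) ?_
        intro x _
        simpa [abs_of_nonneg (norm_nonneg (f (x + s)))] using hMf (x + s)
      refine le_trans (le_trans (le_abs_self _) h1) ?_
      exact mul_le_mul_of_nonneg_left
        (ENNReal.toReal_mono hμJ.ne (measure_mono Set.inter_subset_right)) hM0
    -- second piece, via the pushforward measure
    have hpiece2 : ∫ t in A, ‖f (t + s)‖ ∂μ ≤
        β * ∫ u in Set.Icc (-(r + |s|)) (r + |s|), ‖f u‖ ∂μ := by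
      set ν : Measure ℝ := Measure.map (fun x => x + s) (μ.restrict A) with hν
      have hν_le : ν ≤ ENNReal.ofReal β • μ.restrict A' := by
        refine Measure.le_iff.mpr fun B hB => ?_
        rw [hν, Measure.map_apply (measurable_add_const s) hB,
          Measure.restrict_apply (hB.preimage (measurable_add_const s)),
          Measure.smul_apply, Measure.restrict_apply hB, smul_eq_mul]
        set C : Set ℝ := (fun x => x + s) ⁻¹' B ∩ A with hC
        have hCm : MeasurableSet C := (hB.preimage (measurable_add_const s)).inter hAm
        have hCJ : C ∩ J = ∅ := by
          apply Set.eq_empty_iff_forall_notMem.mpr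
          rintro x ⟨⟨_, hxA⟩, hxJ⟩
          exact hxA.2 hxJ
        refine le_trans (key C hCm hCJ) ?_
        refine mul_le_mul_right (measure_mono ?_) _
        rintro y ⟨x, ⟨hxB, hxA⟩, rfl⟩
        exact ⟨hxB, Set.mem_image_of_mem _ hxA⟩
      have heq : ∫ t in A, ‖f (t + s)‖ ∂μ = ∫ u, ‖f u‖ ∂ν :=
        (integral_map (measurable_add_const s).aemeasurable
          hcont.norm.aestronglyMeasurable).symm
      have hint' : Integrable (fun u => ‖f u‖) (ENNReal.ofReal β • μ.restrict A') :=
        (hintOn _ hμA').smul_measure ENNReal.ofReal_ne_top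
      have h3 : ∫ u, ‖f u‖ ∂ν ≤ ∫ u, ‖f u‖ ∂(ENNReal.ofReal β • μ.restrict A') :=
        integral_mono_measure hν_le
          (Filter.Eventually.of_forall fun u => norm_nonneg _) hint'
      have h4 : ∫ u, ‖f u‖ ∂(ENNReal.ofReal β • μ.restrict A') =
          β * ∫ u in A', ‖f u‖ ∂μ := by
        rw [integral_smul_measure, ENNReal.toReal_ofReal hβ.le, smul_eq_mul]
      have h5 : ∫ u in A', ‖f u‖ ∂μ ≤
          ∫ u in Set.Icc (-(r + |s|)) (r + |s|), ‖f u‖ ∂μ :=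
        setIntegral_mono_set (hintOn _ (hμ_fin _ _))
          (Filter.Eventually.of_forall fun u => norm_nonneg _)
          (HasSubset.Subset.eventuallyLE hA'sub)
      calc ∫ t in A, ‖f (t + s)‖ ∂μ = ∫ u, ‖f u‖ ∂ν := heq
        _ ≤ β * ∫ u in A', ‖f u‖ ∂μ := by rw [← h4]; exact h3
        _ ≤ β * ∫ u in Set.Icc (-(r + |s|)) (r + |s|), ‖f u‖ ∂μ :=
            mul_le_mul_of_nonneg_left h5 hβ.le
    rw [hsplit]
    exact add_le_add hpiece1 hpiece2
  -- now the limiting argument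
  obtain ⟨C, hC, hCev⟩ := aux_ratio μ hμ_fin hM |s| (abs_nonneg s)
  set m : ℝ → ℝ := fun r => (μ (Set.Icc (-r) r)).toReal with hm
  set E : ℝ → ℝ := fun r => ∫ u in Set.Icc (-r) r, ‖f u‖ ∂μ with hE
  have hEnn : ∀ r, 0 ≤ E r :=
    fun r => setIntegral_nonneg measurableSet_Icc fun u _ => norm_nonneg _
  have hupper : Tendsto (fun r => M * (μ J).toReal / m r +
      β * C * (E (r + |s|) / m (r + |s|))) atTop (nhds 0) := by
    have t1 : Tendsto (fun r => M * (μ J).toReal / m r) atTop (nhds 0) := by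
      simp only [div_eq_mul_inv]
      simpa using (hmtop.inv_tendsto_atTop).const_mul (M * (μ J).toReal)
    have t2 : Tendsto (fun r => β * C * (E (r + |s|) / m (r + |s|))) atTop (nhds 0) := by
      have h1 : Tendsto (fun r : ℝ => E (r + |s|) / m (r + |s|)) atTop (nhds 0) :=
        herg.comp (tendsto_atTop_add_const_right atTop |s| tendsto_id)
      have h2 := h1.const_mul (β * C)
      rwa [mul_zero] at h2
    simpa using t1.add t2
  refine squeeze_zero' ?_ ?_ hupper
  · filter_upwards with r
    exact div_nonneg (setIntegral_nonneg measurableSet_Icc fun t _ => norm_nonneg _)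
      ENNReal.toReal_nonneg
  · filter_upwards [hCev, hmtop.eventually_ge_atTop 1] with r hCr hm1
    have hmr : (0 : ℝ) < m r := lt_of_lt_of_le one_pos hm1
    have hmr' : (0 : ℝ) < m (r + |s|) := by
      refine lt_of_lt_of_le hmr (ENNReal.toReal_mono (hμ_fin _ _).ne ?_)
      exact measure_mono (Set.Icc_subset_Icc (by linarith [abs_nonneg s])
        (by linarith [abs_nonneg s]))
    have hmm : m (r + |s|) ≤ C * m r := hCr
    have hdiv : (∫ t in Set.Icc (-r) r, ‖f (t + s)‖ ∂μ) / m r ≤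
        (M * (μ J).toReal + β * E (r + |s|)) / m r := by
      rw [div_eq_mul_inv, div_eq_mul_inv]
      exact mul_le_mul_of_nonneg_right (est r) (inv_nonneg.mpr hmr.le)
    have hsecond : E (r + |s|) / m r ≤ C * (E (r + |s|) / m (r + |s|)) := by
      rw [show C * (E (r + |s|) / m (r + |s|)) = C * E (r + |s|) / m (r + |s|) by ring,
        div_le_div_iff₀ hmr hmr']
      nlinarith [mul_le_mul_of_nonneg_left hmm (hEnn (r + |s|))]
    calc (∫ t in Set.Icc (-r) r, ‖f (t + s)‖ ∂μ) / m r
        ≤ (M * (μ J).toReal + β * E (r + |s|)) / m r := hdiv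
      _ = M * (μ J).toReal / m r + β * (E (r + |s|) / m r) := by
          ring
      _ ≤ M * (μ J).toReal / m r + β * (C * (E (r + |s|) / m (r + |s|))) := by
          exact add_le_add le_rfl (mul_le_mul_of_nonneg_left hsecond hβ.le)
      _ = M * (μ J).toReal / m r + β * C * (E (r + |s|) / m (r + |s|)) := by ring

/-- The averaged translates tend to `0` in the `μ`-mean. -/
lemma aux_K {X : Type*} [NormedAddCommGroup X] (μ : Measure ℝ)
    (hμ_inf : μ Set.univ = ⊤) (hμ_fin : ∀ a b : ℝ, μ (Set.Icc a b) < ⊤)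
    (hM : ConditionM μ) (f : ℝ → X) (hcont : Continuous f)
    {M : ℝ} (hM0 : 0 ≤ M) (hMf : ∀ t, ‖f t‖ ≤ M)
    (herg : Tendsto (fun r : ℝ =>
        (∫ t in Set.Icc (-r) r, ‖f t‖ ∂μ) / (μ (Set.Icc (-r) r)).toReal)
      atTop (nhds 0)) :
    Tendsto (fun r : ℝ =>
        (∫ t in Set.Icc (-r) r, (∫ s in Set.Ioc (0:ℝ) 1, ‖f (t + s)‖) ∂μ) /
          (μ (Set.Icc (-r) r)).toReal)
      atTop (nhds 0) := by
  haveI : Fact ((volume : Measure ℝ) (Set.Ioc (0:ℝ) 1) < ⊤) := ⟨measure_Ioc_lt_top⟩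
  set m : ℝ → ℝ := fun r => (μ (Set.Icc (-r) r)).toReal with hm
  set Φ : ℝ → ℝ → ℝ := fun r s => ∫ t in Set.Icc (-r) r, ‖f (t + s)‖ ∂μ with hΦ
  have hswap : ∀ r : ℝ, ∫ t in Set.Icc (-r) r, (∫ s in Set.Ioc (0:ℝ) 1, ‖f (t + s)‖) ∂μ =
      ∫ s in Set.Ioc (0:ℝ) 1, Φ r s := by
    intro r
    haveI : Fact (μ (Set.Icc (-r) r) < ⊤) := ⟨hμ_fin _ _⟩
    refine integral_integral_swap ?_
    refine Integrable.mono' (integrable_const M)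
      ((hcont.comp (continuous_fst.add continuous_snd)).norm.aestronglyMeasurable) ?_
    exact Filter.Eventually.of_forall fun z => by
      simpa [Function.uncurry, abs_of_nonneg (norm_nonneg _)] using hMf (z.1 + z.2)
  have hK_eq : ∀ r : ℝ,
      (∫ t in Set.Icc (-r) r, (∫ s in Set.Ioc (0:ℝ) 1, ‖f (t + s)‖) ∂μ) / m r =
      ∫ s in Set.Ioc (0:ℝ) 1, Φ r s / m r := by
    intro r
    rw [hswap r, integral_div]
  have hmeasΦ : ∀ r : ℝ, AEStronglyMeasurable (fun s => Φ r s / m r)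
      (volume.restrict (Set.Ioc (0:ℝ) 1)) := by
    intro r
    haveI : Fact (μ (Set.Icc (-r) r) < ⊤) := ⟨hμ_fin _ _⟩
    have hc : StronglyMeasurable fun z : ℝ × ℝ => ‖f (z.2 + z.1)‖ :=
      (hcont.comp (continuous_snd.add continuous_fst)).norm.stronglyMeasurable
    simp only [div_eq_mul_inv]
    exact ((hc.integral_prod_right'.mul_const _)).aestronglyMeasurable
  have hΦnn : ∀ r s, 0 ≤ Φ r s :=
    fun r s => setIntegral_nonneg measurableSet_Icc fun t _ => norm_nonneg _
  have hΦle : ∀ r s, Φ r s ≤ M * m r := by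
    intro r s
    refine le_trans (le_abs_self _) ?_
    refine norm_setIntegral_le_of_norm_le_const (f := fun t => ‖f (t + s)‖) (hμ_fin _ _) ?_
    intro t _
    simpa [abs_of_nonneg (norm_nonneg _)] using hMf (t + s)
  have hbound : ∀ r s, ‖Φ r s / m r‖ ≤ M := by
    intro r s
    rcases eq_or_lt_of_le (ENNReal.toReal_nonneg : (0:ℝ) ≤ m r) with h | h
    · have h0 : m r = 0 := h.symm
      rw [h0, div_zero, norm_zero]
      exact hM0
    · rw [Real.norm_eq_abs, abs_of_nonneg (div_nonneg (hΦnn r s) ENNReal.toReal_nonneg),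
        div_le_iff₀ h]
      exact hΦle r s
  rw [tendsto_iff_seq_tendsto]
  intro x hx
  have hlim : Tendsto (fun n => ∫ s in Set.Ioc (0:ℝ) 1, Φ (x n) s / m (x n)) atTop
      (nhds (∫ _ in Set.Ioc (0:ℝ) 1, (0:ℝ))) := by
    refine tendsto_integral_of_dominated_convergence (fun _ => M)
      (fun n => hmeasΦ (x n)) ?_ ?_ ?_
    · exact (integrableOn_const_iff).mpr (Or.inr measure_Ioc_lt_top)
    · exact fun n => Filter.Eventually.of_forall fun s => hbound (x n) s
    · refine Filter.Eventually.of_forall fun s => ?_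
      exact (aux_shift μ hμ_inf hμ_fin hM f hcont hM0 hMf herg s).comp hx
  rw [integral_zero] at hlim
  refine hlim.congr fun n => ?_
  exact (hK_eq (x n)).symm

/-- Every bounded continuous `μ`-ergodic function is Stepanov `μ`-ergodic of order `p`:
`𝓔(ℝ,X,μ) ⊆ 𝓔^p(ℝ,X,μ)`. -/
theorem ergodic_subset_stepanovErgodic
    {X : Type*} [NormedAddCommGroup X] [NormedSpace ℝ X] [CompleteSpace X]
    (p : ℝ) (hp : 1 ≤ p) (μ : Measure ℝ)
    (hμ_inf : μ Set.univ = ⊤) (hμ_fin : ∀ a b : ℝ, μ (Set.Icc a b) < ⊤)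
    (hM : ConditionM μ)
    (f : ℝ → X) (hcont : Continuous f) (hbdd : ∃ M, ∀ t : ℝ, ‖f t‖ ≤ M)
    (herg : Tendsto (fun r : ℝ =>
        (∫ t in Set.Icc (-r) r, ‖f t‖ ∂μ) / (μ (Set.Icc (-r) r)).toReal)
      atTop (nhds 0)) :
    Tendsto (fun r : ℝ =>
        (∫ t in Set.Icc (-r) r, (∫ s in Set.Ioc t (t + 1), ‖f s‖ ^ p) ^ (1 / p) ∂μ) /
          (μ (Set.Icc (-r) r)).toReal)
      atTop (nhds 0) := by
  obtain ⟨M₀, hM₀f⟩ := hbdd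
  set M : ℝ := max M₀ 0 with hMdef
  have hM0 : 0 ≤ M := le_max_right _ _
  have hMf : ∀ t, ‖f t‖ ≤ M := fun t => le_trans (hM₀f t) (le_max_left _ _)
  have hp0 : (0:ℝ) < p := lt_of_lt_of_le one_pos hp
  have hmtop := aux_mtop μ hμ_inf hμ_fin
  have hK := aux_K μ hμ_inf hμ_fin hM f hcont hM0 hMf herg
  set m : ℝ → ℝ := fun r => (μ (Set.Icc (-r) r)).toReal with hm
  set g : ℝ → ℝ := fun t => ∫ s in Set.Ioc (0:ℝ) 1, ‖f (t + s)‖ ^ p with hgdef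
  set u : ℝ → ℝ := fun t => ∫ s in Set.Ioc (0:ℝ) 1, ‖f (t + s)‖ with hudef
  -- rewrite the inner integral via translation invariance
  have hg_rw : ∀ t : ℝ, (∫ s in Set.Ioc t (t + 1), ‖f s‖ ^ p) = g t := by
    intro t
    have h1 : (∫ s in (0:ℝ)..1, ‖f (t + s)‖ ^ p) = ∫ x in (t + 0)..(t + 1), ‖f x‖ ^ p :=
      intervalIntegral.integral_comp_add_left (fun x => ‖f x‖ ^ p) t
    rw [add_zero] at h1
    calc (∫ s in Set.Ioc t (t + 1), ‖f s‖ ^ p)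
        = ∫ s in t..(t + 1), ‖f s‖ ^ p :=
          (intervalIntegral.integral_of_le (by linarith)).symm
      _ = ∫ s in (0:ℝ)..1, ‖f (t + s)‖ ^ p := h1.symm
      _ = g t := by rw [hgdef, intervalIntegral.integral_of_le zero_le_one]
  simp_rw [hg_rw]
  -- pointwise facts
  have hfp_cont : Continuous fun y : ℝ => ‖f y‖ ^ p :=
    hcont.norm.rpow_const fun y => Or.inr hp0.le
  have hgnn : ∀ t, 0 ≤ g t :=
    fun t => setIntegral_nonneg measurableSet_Ioc fun s _ => Real.rpow_nonneg (norm_nonneg _) p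
  have hunn : ∀ t, 0 ≤ u t :=
    fun t => setIntegral_nonneg measurableSet_Ioc fun s _ => norm_nonneg _
  have hvol1 : ((volume : Measure ℝ) (Set.Ioc (0:ℝ) 1)).toReal = 1 := by
    simp [Real.volume_Ioc]
  have hg_le : ∀ t, g t ≤ M ^ p := by
    intro t
    have h1 : ‖∫ s in Set.Ioc (0:ℝ) 1, ‖f (t + s)‖ ^ p‖ ≤
        M ^ p * ((volume : Measure ℝ) (Set.Ioc (0:ℝ) 1)).toReal := by
      refine norm_setIntegral_le_of_norm_le_const measure_Ioc_lt_top ?_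
      intro s _
      rw [Real.norm_eq_abs, abs_of_nonneg (Real.rpow_nonneg (norm_nonneg _) p)]
      exact Real.rpow_le_rpow (norm_nonneg _) (hMf _) hp0.le
    rw [hvol1, mul_one] at h1
    exact le_trans (le_abs_self _) h1
  have hu_le : ∀ t, u t ≤ M := by
    intro t
    have h1 : ‖∫ s in Set.Ioc (0:ℝ) 1, ‖f (t + s)‖‖ ≤
        M * ((volume : Measure ℝ) (Set.Ioc (0:ℝ) 1)).toReal := by
      refine norm_setIntegral_le_of_norm_le_const measure_Ioc_lt_top ?_
      intro s _
      rw [Real.norm_eq_abs, abs_of_nonneg (norm_nonneg _)]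
      exact hMf _
    rw [hvol1, mul_one] at h1
    exact le_trans (le_abs_self _) h1
  -- measurability of g and u
  have hgSM : StronglyMeasurable g := by
    have hc : StronglyMeasurable fun z : ℝ × ℝ => ‖f (z.1 + z.2)‖ ^ p :=
      (hfp_cont.comp (continuous_fst.add continuous_snd)).stronglyMeasurable
    exact hc.integral_prod_right'
  have huSM : StronglyMeasurable u := by
    have hc : StronglyMeasurable fun z : ℝ × ℝ => ‖f (z.1 + z.2)‖ :=
      (hcont.comp (continuous_fst.add continuous_snd)).norm.stronglyMeasurable
    exact hc.integral_prod_right'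
  -- pointwise estimate gₜ ≤ M^(p-1) uₜ
  have hgu : ∀ t, g t ≤ M ^ (p - 1) * u t := by
    intro t
    have hpw : ∀ s : ℝ, ‖f (t + s)‖ ^ p ≤ M ^ (p - 1) * ‖f (t + s)‖ := by
      intro s
      set x : ℝ := ‖f (t + s)‖ with hx
      have hx0 : 0 ≤ x := norm_nonneg _
      rcases eq_or_lt_of_le hx0 with h | h
      · rw [← h, Real.zero_rpow hp0.ne', mul_zero]
      · have hxp : x ^ p = x ^ (p - 1) * x := by
          rw [show p = p - 1 + 1 by ring, Real.rpow_add_one h.ne']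
          ring_nf
        rw [hxp]
        exact mul_le_mul_of_nonneg_right
          (Real.rpow_le_rpow hx0 (hMf _) (by linarith)) hx0
    have hint1 : IntegrableOn (fun s => ‖f (t + s)‖ ^ p) (Set.Ioc (0:ℝ) 1) volume :=
      (hfp_cont.comp (continuous_add_left t)).integrableOn_Ioc
    have hint2 : IntegrableOn (fun s => M ^ (p - 1) * ‖f (t + s)‖) (Set.Ioc (0:ℝ) 1) volume :=
      ((hcont.comp (continuous_add_left t)).norm.integrableOn_Ioc).const_mul _
    calc g t ≤ ∫ s in Set.Ioc (0:ℝ) 1, M ^ (p - 1) * ‖f (t + s)‖ :=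
          integral_mono hint1 hint2 hpw
      _ = M ^ (p - 1) * u t := by rw [integral_const_mul]
  -- integrability over Icc (-r) r with respect to μ
  have hIg : ∀ r : ℝ, IntegrableOn g (Set.Icc (-r) r) μ := by
    intro r
    refine aux_integrableOn μ (hμ_fin _ _) hgSM.aestronglyMeasurable.restrict
      (C := M ^ p) fun t => ?_
    rw [abs_of_nonneg (hgnn t)]; exact hg_le t
  have hIu : ∀ r : ℝ, IntegrableOn u (Set.Icc (-r) r) μ := by
    intro r
    refine aux_integrableOn μ (hμ_fin _ _) huSM.aestronglyMeasurable.restrict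
      (C := M) fun t => ?_
    rw [abs_of_nonneg (hunn t)]; exact hu_le t
  have hIgp : ∀ r : ℝ, IntegrableOn (fun t => g t ^ (1 / p)) (Set.Icc (-r) r) μ := by
    intro r
    refine aux_integrableOn μ (hμ_fin _ _)
      ((hgSM.measurable.pow measurable_const).aestronglyMeasurable.restrict)
      (C := (M ^ p) ^ (1 / p)) fun t => ?_
    rw [abs_of_nonneg (Real.rpow_nonneg (hgnn t) _)]
    exact Real.rpow_le_rpow (hgnn t) (hg_le t) (by positivity)
  -- the epsilon trick, pointwise
  have hpw2 : ∀ ε : ℝ, 0 < ε → ∀ x : ℝ, 0 ≤ x →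
      x ^ (1 / p) ≤ ε ^ (1 / p) + ε ^ ((1 - p) / p) * x := by
    intro ε hε x hx
    rcases le_or_gt x ε with h | h
    · have h1 : x ^ (1 / p) ≤ ε ^ (1 / p) := Real.rpow_le_rpow hx h (by positivity)
      have h2 : 0 ≤ ε ^ ((1 - p) / p) * x :=
        mul_nonneg (Real.rpow_nonneg hε.le _) hx
      linarith
    · have hx0 : 0 < x := hε.trans h
      have h1 : x ^ (1 / p) = x ^ ((1 - p) / p) * x := by
        rw [show (1:ℝ) / p = (1 - p) / p + 1 by field_simp; ring, Real.rpow_add_one hx0.ne']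
      have h2 : x ^ ((1 - p) / p) ≤ ε ^ ((1 - p) / p) :=
        Real.rpow_le_rpow_of_nonpos hε h.le
          (div_nonpos_of_nonpos_of_nonneg (by linarith) hp0.le)
      have h3 : 0 ≤ ε ^ (1 / p) := Real.rpow_nonneg hε.le _
      calc x ^ (1 / p) = x ^ ((1 - p) / p) * x := h1
        _ ≤ ε ^ ((1 - p) / p) * x := mul_le_mul_of_nonneg_right h2 hx0.le
        _ ≤ ε ^ (1 / p) + ε ^ ((1 - p) / p) * x := by linarith
  -- main integral estimate
  have hGle : ∀ ε : ℝ, 0 < ε → ∀ r : ℝ, 0 < m r →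
      (∫ t in Set.Icc (-r) r, g t ^ (1 / p) ∂μ) / m r ≤
      ε ^ (1 / p) + ε ^ ((1 - p) / p) * M ^ (p - 1) *
        ((∫ t in Set.Icc (-r) r, u t ∂μ) / m r) := by
    intro ε hε r hmr
    have hstep1 : ∫ t in Set.Icc (-r) r, g t ^ (1 / p) ∂μ ≤
        ε ^ (1 / p) * m r + ε ^ ((1 - p) / p) * ∫ t in Set.Icc (-r) r, g t ∂μ := by
      have hint2 : IntegrableOn (fun t => ε ^ (1 / p) + ε ^ ((1 - p) / p) * g t)
          (Set.Icc (-r) r) μ :=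
        ((integrableOn_const_iff).mpr (Or.inr (hμ_fin _ _))).add ((hIg r).const_mul _)
      calc ∫ t in Set.Icc (-r) r, g t ^ (1 / p) ∂μ
          ≤ ∫ t in Set.Icc (-r) r, (ε ^ (1 / p) + ε ^ ((1 - p) / p) * g t) ∂μ :=
            integral_mono (hIgp r) hint2 fun t => hpw2 ε hε (g t) (hgnn t)
        _ = ε ^ (1 / p) * m r + ε ^ ((1 - p) / p) * ∫ t in Set.Icc (-r) r, g t ∂μ := by
            rw [integral_add ((integrableOn_const_iff).mpr (Or.inr (hμ_fin _ _)) :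
                IntegrableOn (fun _ => ε ^ (1 / p)) (Set.Icc (-r) r) μ)
              ((hIg r).const_mul _), setIntegral_const, integral_const_mul, smul_eq_mul,
              mul_comm]
            rfl
    have hstep2 : ∫ t in Set.Icc (-r) r, g t ∂μ ≤
        M ^ (p - 1) * ∫ t in Set.Icc (-r) r, u t ∂μ := by
      calc ∫ t in Set.Icc (-r) r, g t ∂μ
          ≤ ∫ t in Set.Icc (-r) r, M ^ (p - 1) * u t ∂μ :=
            integral_mono (hIg r) ((hIu r).const_mul _) hgu
        _ = M ^ (p - 1) * ∫ t in Set.Icc (-r) r, u t ∂μ := integral_const_mul _ _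
    have hε2 : (0:ℝ) ≤ ε ^ ((1 - p) / p) := Real.rpow_nonneg hε.le _
    have htot : ∫ t in Set.Icc (-r) r, g t ^ (1 / p) ∂μ ≤
        ε ^ (1 / p) * m r + ε ^ ((1 - p) / p) * M ^ (p - 1) *
          ∫ t in Set.Icc (-r) r, u t ∂μ := by
      refine le_trans hstep1 ?_
      have := mul_le_mul_of_nonneg_left hstep2 hε2
      nlinarith
    calc (∫ t in Set.Icc (-r) r, g t ^ (1 / p) ∂μ) / m r
        ≤ (ε ^ (1 / p) * m r + ε ^ ((1 - p) / p) * M ^ (p - 1) *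
            ∫ t in Set.Icc (-r) r, u t ∂μ) / m r := by
          rw [div_eq_mul_inv, div_eq_mul_inv]
          exact mul_le_mul_of_nonneg_right htot (inv_nonneg.mpr hmr.le)
      _ = ε ^ (1 / p) + ε ^ ((1 - p) / p) * M ^ (p - 1) *
            ((∫ t in Set.Icc (-r) r, u t ∂μ) / m r) := by
          field_simp
  -- conclusion
  rw [Metric.tendsto_atTop]
  intro δ hδ
  set ε : ℝ := (δ / 2) ^ p with hεdef
  have hε : 0 < ε := Real.rpow_pos_of_pos (half_pos hδ) p
  have hε1 : ε ^ (1 / p) = δ / 2 := by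
    rw [hεdef, ← Real.rpow_mul (half_pos hδ).le, mul_one_div_cancel hp0.ne', Real.rpow_one]
  have hc₀ : (0:ℝ) ≤ ε ^ ((1 - p) / p) * M ^ (p - 1) :=
    mul_nonneg (Real.rpow_nonneg hε.le _) (Real.rpow_nonneg hM0 _)
  have h2 : ∀ᶠ r : ℝ in atTop, ε ^ ((1 - p) / p) * M ^ (p - 1) *
      ((∫ t in Set.Icc (-r) r, u t ∂μ) / m r) < δ / 2 := by
    have h3 := hK.const_mul (ε ^ ((1 - p) / p) * M ^ (p - 1))
    rw [mul_zero] at h3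
    exact h3.eventually (eventually_lt_nhds (half_pos hδ))
  have hfinal : ∀ᶠ r : ℝ in atTop,
      dist ((∫ t in Set.Icc (-r) r, g t ^ (1 / p) ∂μ) / m r) 0 < δ := by
    filter_upwards [h2, hmtop.eventually_ge_atTop 1] with r hr2 hr1
    have hmr : (0:ℝ) < m r := lt_of_lt_of_le one_pos hr1
    have hGnn : 0 ≤ (∫ t in Set.Icc (-r) r, g t ^ (1 / p) ∂μ) / m r :=
      div_nonneg (setIntegral_nonneg measurableSet_Icc fun t _ =>
        Real.rpow_nonneg (hgnn t) _) ENNReal.toReal_nonneg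
    rw [Real.dist_eq, sub_zero, abs_of_nonneg hGnn]
    calc (∫ t in Set.Icc (-r) r, g t ^ (1 / p) ∂μ) / m r
        ≤ ε ^ (1 / p) + ε ^ ((1 - p) / p) * M ^ (p - 1) *
            ((∫ t in Set.Icc (-r) r, u t ∂μ) / m r) := hGle ε hε r hmr
      _ < δ / 2 + δ / 2 := by rw [hε1]; linarith
      _ = δ := by ring
  obtain ⟨N, hN⟩ := eventually_atTop.mp hfinal
  exact ⟨N, hN⟩
end

section
/- Let μ ∈ 𝓜 and f : ℝ → X bounded continuous. Then f is μ-ergodic if and only if for every ε > 0, lim_{r→∞} μ({t ∈ [−r,r] : ‖f(t)‖ ≥ ε}) / μ([−r,r]) = 0. -/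
open MeasureTheory Set Filter

/-- A bounded continuous function `f` is `μ`-ergodic if and only if for every `ε > 0`
the relative `μ`-measure of `{t ∈ [-r,r] : ‖f t‖ ≥ ε}` tends to `0` as `r → ∞`. -/
theorem ergodic_iff_measure_superlevel
    {X : Type*} [NormedAddCommGroup X] [NormedSpace ℝ X] [CompleteSpace X]
    (μ : Measure ℝ)
    (hμ_inf : μ Set.univ = ⊤) (hμ_fin : ∀ a b : ℝ, μ (Set.Icc a b) < ⊤)
    (f : ℝ → X) (hcont : Continuous f) (hbdd : ∃ M, ∀ t : ℝ, ‖f t‖ ≤ M) :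
    Tendsto (fun r : ℝ =>
        (∫ t in Set.Icc (-r) r, ‖f t‖ ∂μ) / (μ (Set.Icc (-r) r)).toReal)
      atTop (nhds 0) ↔
    ∀ ε : ℝ, 0 < ε →
      Tendsto (fun r : ℝ =>
          (μ {t ∈ Set.Icc (-r) r | ε ≤ ‖f t‖}).toReal / (μ (Set.Icc (-r) r)).toReal)
        atTop (nhds 0) := by
  obtain ⟨M, hM⟩ := hbdd
  have hM0 : 0 ≤ M := le_trans (norm_nonneg (f 0)) (hM 0)
  -- eventually, μ (Icc (-r) r) is positive
  have hpos : ∀ᶠ r in (atTop : Filter ℝ), 0 < μ (Icc (-r) r) := by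
    obtain ⟨n, hn⟩ : ∃ n : ℕ, 0 < μ (Icc (-(n : ℝ)) n) := by
      by_contra hcon
      push_neg at hcon
      have hcover : (Set.univ : Set ℝ) ⊆ ⋃ n : ℕ, Icc (-(n : ℝ)) n := by
        intro x _
        obtain ⟨n, hn⟩ := exists_nat_ge |x|
        refine mem_iUnion.2 ⟨n, ?_⟩
        simp only [mem_Icc]
        exact abs_le.1 hn
      have hle : μ Set.univ ≤ ∑' n : ℕ, μ (Icc (-(n : ℝ)) n) :=
        le_trans (measure_mono hcover) (measure_iUnion_le _)
      have hzero : ∀ n : ℕ, μ (Icc (-(n : ℝ)) n) = 0 := fun n =>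
        le_antisymm (hcon n) zero_le
      simp only [hzero, tsum_zero, hμ_inf, top_le_iff] at hle
      exact ENNReal.top_ne_zero hle.symm
    filter_upwards [eventually_ge_atTop (n : ℝ)] with r hr
    exact lt_of_lt_of_le hn (measure_mono (Icc_subset_Icc (by linarith) hr))
  have hfinR : ∀ r : ℝ, IsFiniteMeasure (μ.restrict (Icc (-r) r)) := fun r =>
    ⟨by rw [Measure.restrict_apply_univ]; exact hμ_fin _ _⟩
  have hint : ∀ r : ℝ, IntegrableOn (fun t => ‖f t‖) (Icc (-r) r) μ := by
    intro r
    have := hfinR r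
    exact Integrable.mono' (integrable_const M)
      (hcont.norm.aestronglyMeasurable)
      (Eventually.of_forall fun t => by simpa using hM t)
  have hInt_nonneg : ∀ r : ℝ, 0 ≤ ∫ t in Icc (-r) r, ‖f t‖ ∂μ := fun r =>
    integral_nonneg fun t => norm_nonneg _
  constructor
  · intro h ε hε
    have hA : MeasurableSet {x : ℝ | ε ≤ ‖f x‖} :=
      (isClosed_le continuous_const hcont.norm).measurableSet
    have key : ∀ᶠ r in (atTop : Filter ℝ),
        (μ {t ∈ Icc (-r) r | ε ≤ ‖f t‖}).toReal / (μ (Icc (-r) r)).toReal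
          ≤ ε⁻¹ * ((∫ t in Icc (-r) r, ‖f t‖ ∂μ) / (μ (Icc (-r) r)).toReal) := by
      filter_upwards [hpos] with r hr
      have hc : 0 < (μ (Icc (-r) r)).toReal :=
        ENNReal.toReal_pos hr.ne' (hμ_fin _ _).ne
      have hseteq : {t ∈ Icc (-r) r | ε ≤ ‖f t‖} = {x : ℝ | ε ≤ ‖f x‖} ∩ Icc (-r) r := by
        ext x; simp only [mem_sep_iff, mem_inter_iff, mem_setOf_eq]; tauto
      have hmarkov := mul_meas_ge_le_integral_of_nonneg
        (μ := μ.restrict (Icc (-r) r)) (f := fun t => ‖f t‖)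
        (ae_of_all _ fun t => norm_nonneg (f t)) (hint r) ε
      rw [measureReal_def, Measure.restrict_apply hA] at hmarkov
      rw [hseteq]
      rw [div_le_iff₀ hc, mul_assoc, div_mul_cancel₀ _ hc.ne']
      calc (μ ({x : ℝ | ε ≤ ‖f x‖} ∩ Icc (-r) r)).toReal
          = ε⁻¹ * (ε * (μ ({x : ℝ | ε ≤ ‖f x‖} ∩ Icc (-r) r)).toReal) := by
            field_simp
        _ ≤ ε⁻¹ * ∫ t in Icc (-r) r, ‖f t‖ ∂μ :=
            mul_le_mul_of_nonneg_left hmarkov (inv_nonneg.2 hε.le)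
    have hlim : Tendsto (fun r : ℝ =>
        ε⁻¹ * ((∫ t in Icc (-r) r, ‖f t‖ ∂μ) / (μ (Icc (-r) r)).toReal))
        atTop (nhds 0) := by
      simpa using h.const_mul ε⁻¹
    exact squeeze_zero'
      (Eventually.of_forall fun r => div_nonneg ENNReal.toReal_nonneg ENNReal.toReal_nonneg)
      key hlim
  · intro h
    rw [tendsto_order]
    constructor
    · intro a ha
      exact Eventually.of_forall fun r =>
        lt_of_lt_of_le ha (div_nonneg (hInt_nonneg r) ENNReal.toReal_nonneg)
    · intro δ hδ
      set ε := δ / 2 with hεdef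
      have hε : 0 < ε := half_pos hδ
      have hA : MeasurableSet {x : ℝ | ε ≤ ‖f x‖} :=
        (isClosed_le continuous_const hcont.norm).measurableSet
      have hM1 : (0:ℝ) < M + 1 := by linarith
      have hq : (0:ℝ) < δ / (2 * (M + 1)) := by positivity
      have hratio := (h ε hε).eventually (eventually_lt_nhds hq)
      filter_upwards [hpos, hratio] with r hr hrat
      have hc : 0 < (μ (Icc (-r) r)).toReal :=
        ENNReal.toReal_pos hr.ne' (hμ_fin _ _).ne
      set ν := μ.restrict (Icc (-r) r) with hν
      have := hfinR r
      have hseteq : {t ∈ Icc (-r) r | ε ≤ ‖f t‖} = {x : ℝ | ε ≤ ‖f x‖} ∩ Icc (-r) r := by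
        ext x; simp only [mem_sep_iff, mem_inter_iff, mem_setOf_eq]; tauto
      have hνA : ν {x : ℝ | ε ≤ ‖f x‖} = μ {t ∈ Icc (-r) r | ε ≤ ‖f t‖} := by
        rw [hν, Measure.restrict_apply hA, hseteq]
      -- split the integral
      have hsplit : (∫ t in {x : ℝ | ε ≤ ‖f x‖}, ‖f t‖ ∂ν)
          + ∫ t in {x : ℝ | ε ≤ ‖f x‖}ᶜ, ‖f t‖ ∂ν = ∫ t, ‖f t‖ ∂ν :=
        integral_add_compl hA (hint r)
      have h1 : (∫ t in {x : ℝ | ε ≤ ‖f x‖}, ‖f t‖ ∂ν)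
          ≤ M * (μ {t ∈ Icc (-r) r | ε ≤ ‖f t‖}).toReal := by
        calc (∫ t in {x : ℝ | ε ≤ ‖f x‖}, ‖f t‖ ∂ν)
            ≤ ∫ _ in {x : ℝ | ε ≤ ‖f x‖}, M ∂ν :=
              setIntegral_mono_on (Integrable.integrableOn (μ := ν) (hint r)) (integrable_const M).integrableOn
                hA (fun x _ => hM x)
          _ = M * (ν {x : ℝ | ε ≤ ‖f x‖}).toReal := by
              rw [setIntegral_const, smul_eq_mul, mul_comm, measureReal_def]
          _ = M * (μ {t ∈ Icc (-r) r | ε ≤ ‖f t‖}).toReal := by rw [hνA]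
      have h2 : (∫ t in {x : ℝ | ε ≤ ‖f x‖}ᶜ, ‖f t‖ ∂ν)
          ≤ ε * (μ (Icc (-r) r)).toReal := by
        calc (∫ t in {x : ℝ | ε ≤ ‖f x‖}ᶜ, ‖f t‖ ∂ν)
            ≤ ∫ _ in {x : ℝ | ε ≤ ‖f x‖}ᶜ, ε ∂ν :=
              setIntegral_mono_on (Integrable.integrableOn (μ := ν) (hint r)) (integrable_const ε).integrableOn
                hA.compl (fun x hx => (lt_of_not_ge (show ¬ ε ≤ ‖f x‖ from hx)).le)
          _ = (ν {x : ℝ | ε ≤ ‖f x‖}ᶜ).toReal * ε := by rw [setIntegral_const, smul_eq_mul, measureReal_def]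
          _ ≤ (μ (Icc (-r) r)).toReal * ε := by
              refine mul_le_mul_of_nonneg_right ?_ hε.le
              refine ENNReal.toReal_mono (hμ_fin _ _).ne ?_
              rw [hν]
              exact le_trans (measure_mono (subset_univ _))
                (le_of_eq (Measure.restrict_apply_univ _))
          _ = ε * (μ (Icc (-r) r)).toReal := mul_comm _ _
      have hIν : (∫ t in Icc (-r) r, ‖f t‖ ∂μ) = ∫ t, ‖f t‖ ∂ν := rfl
      have hbound : (∫ t in Icc (-r) r, ‖f t‖ ∂μ)
          ≤ M * (μ {t ∈ Icc (-r) r | ε ≤ ‖f t‖}).toReal + ε * (μ (Icc (-r) r)).toReal := by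
        rw [hIν, ← hsplit]
        exact add_le_add h1 h2
      have hfrac : (∫ t in Icc (-r) r, ‖f t‖ ∂μ) / (μ (Icc (-r) r)).toReal
          ≤ M * ((μ {t ∈ Icc (-r) r | ε ≤ ‖f t‖}).toReal / (μ (Icc (-r) r)).toReal) + ε := by
        rw [div_le_iff₀ hc, add_mul, mul_assoc, div_mul_cancel₀ _ hc.ne']
        exact hbound
      calc (∫ t in Icc (-r) r, ‖f t‖ ∂μ) / (μ (Icc (-r) r)).toReal
          ≤ M * ((μ {t ∈ Icc (-r) r | ε ≤ ‖f t‖}).toReal / (μ (Icc (-r) r)).toReal) + ε :=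
            hfrac
        _ ≤ M * (δ / (2 * (M + 1))) + ε :=
            add_le_add_left (mul_le_mul_of_nonneg_left hrat.le hM0) ε
        _ < (M + 1) * (δ / (2 * (M + 1))) + ε :=
            add_lt_add_left (mul_lt_mul_of_pos_right (lt_add_one M) hq) ε
        _ = δ / 2 + δ / 2 := by rw [hεdef]; field_simp
        _ = δ := add_halves δ
end

section
/- Suppose (X,d) is a complete metric space and T : X → X satisfies: for each ε > 0 there exists δ > 0 such that for all x, y ∈ X, ε ≤ d(x,y) ≤ ε + δ implies d(Tx,Ty) < ε. Then T has a unique fixed point ξ, and for every x ∈ X the iterates Tⁿx converge to ξ. -/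
open Filter

/-- Meir–Keeler fixed point theorem: if `(X, d)` is a complete metric space and
`T : X → X` satisfies: for each `ε > 0` there is `δ > 0` such that
`ε ≤ d x y ≤ ε + δ` implies `d (T x) (T y) < ε`, then `T` has a unique fixed point `ξ`
and `T^[n] x → ξ` for every `x`. -/
theorem meir_keeler_fixed_point
    {X : Type*} [MetricSpace X] [CompleteSpace X] [Nonempty X]
    (T : X → X)
    (hT : ∀ ε : ℝ, 0 < ε → ∃ δ : ℝ, 0 < δ ∧ ∀ x y : X,
      ε ≤ dist x y → dist x y ≤ ε + δ → dist (T x) (T y) < ε) :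
    ∃ ξ : X, T ξ = ξ ∧ (∀ ζ : X, T ζ = ζ → ζ = ξ) ∧
      ∀ x : X, Tendsto (fun n : ℕ => T^[n] x) atTop (nhds ξ) := by
  -- strict contractivity on distinct points
  have hcon : ∀ x y : X, x ≠ y → dist (T x) (T y) < dist x y := by
    intro x y hxy
    have hd : 0 < dist x y := dist_pos.2 hxy
    obtain ⟨δ, hδ, h⟩ := hT (dist x y) hd
    exact h x y le_rfl (by linarith)
  have hne : ∀ x y : X, dist (T x) (T y) ≤ dist x y := by
    intro x y
    rcases eq_or_ne x y with rfl | h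
    · simp
    · exact (hcon x y h).le
  have hTcont : Continuous T :=
    (LipschitzWith.of_dist_le_mul (K := 1) (by intro x y; simpa using hne x y)).continuous
  -- successive distances tend to 0
  have ha0 : ∀ x : X,
      Tendsto (fun n => dist (T^[n] x) (T^[n+1] x)) atTop (nhds 0) := by
    intro x
    set a : ℕ → ℝ := fun n => dist (T^[n] x) (T^[n+1] x) with ha
    have hanti : Antitone a := by
      apply antitone_nat_of_succ_le
      intro n
      have := hne (T^[n] x) (T^[n+1] x)
      simpa [ha, Function.iterate_succ_apply'] using this
    have hbdd : BddBelow (Set.range a) := ⟨0, by rintro _ ⟨n, rfl⟩; exact dist_nonneg⟩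
    have hlim : Tendsto a atTop (nhds (⨅ n, a n)) := tendsto_atTop_ciInf hanti hbdd
    have hL0 : 0 ≤ ⨅ n, a n := le_ciInf fun n => dist_nonneg
    rcases eq_or_lt_of_le hL0 with hL | hL
    · rwa [← hL] at hlim
    · exfalso
      set L := ⨅ n, a n
      obtain ⟨δ, hδ, h⟩ := hT L hL
      have hLa : ∀ n, L ≤ a n := fun n => ciInf_le hbdd n
      obtain ⟨n, hn⟩ : ∃ n, a n < L + δ :=
        (hlim.eventually (gt_mem_nhds (by linarith : L < L + δ))).exists
      have h2 : a (n+1) < L := by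
        have := h (T^[n] x) (T^[n+1] x) (hLa n) hn.le
        simpa [ha, Function.iterate_succ_apply'] using this
      exact absurd (hLa (n+1)) (not_le.2 h2)
  -- orbits are Cauchy
  have hcauchy : ∀ x : X, CauchySeq (fun n => T^[n] x) := by
    intro x
    rw [Metric.cauchySeq_iff]
    intro ε hε
    obtain ⟨δ₀, hδ₀, h0⟩ := hT (ε/2) (by linarith)
    set δ := min δ₀ (ε/2) with hδdef
    have hδ : 0 < δ := lt_min hδ₀ (by linarith)
    have hδle : δ ≤ ε/2 := min_le_right _ _
    have h : ∀ p q : X, ε/2 ≤ dist p q → dist p q ≤ ε/2 + δ → dist (T p) (T q) < ε/2 := by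
      intro p q h1 h2
      exact h0 p q h1 (h2.trans (add_le_add le_rfl (min_le_left _ _)))
    obtain ⟨N, hN⟩ := (eventually_atTop).1 ((ha0 x).eventually (gt_mem_nhds hδ))
    have key : ∀ k, ∀ n, N ≤ n → dist (T^[n] x) (T^[n+1+k] x) < ε/2 + δ := by
      intro k
      induction k with
      | zero =>
        intro n hn
        have := hN n hn
        calc dist (T^[n] x) (T^[n+1+0] x) < δ := by simpa using this
          _ ≤ ε/2 + δ := by linarith
      | succ k ih =>
        intro n hn
        have step : dist (T^[n+1] x) (T^[n+1+(k+1)] x) < ε/2 := by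
          have e1 : T^[n+1] x = T (T^[n] x) := Function.iterate_succ_apply' T n x
          have e2 : T^[n+1+(k+1)] x = T (T^[n+1+k] x) := by
            have : n+1+(k+1) = (n+1+k)+1 := by ring
            rw [this, Function.iterate_succ_apply']
          rw [e1, e2]
          rcases lt_or_ge (dist (T^[n] x) (T^[n+1+k] x)) (ε/2) with hlt | hge
          · exact lt_of_le_of_lt (hne _ _) hlt
          · exact h _ _ hge (ih n hn).le
        calc dist (T^[n] x) (T^[n+1+(k+1)] x)
            ≤ dist (T^[n] x) (T^[n+1] x) + dist (T^[n+1] x) (T^[n+1+(k+1)] x) :=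
              dist_triangle _ _ _
          _ < δ + ε/2 := add_lt_add (hN n hn) step
          _ = ε/2 + δ := by ring
    refine ⟨N, fun m hm n hn => ?_⟩
    rcases lt_trichotomy m n with hlt | rfl | hgt
    · have : n = m + 1 + (n - m - 1) := by omega
      rw [this]
      have := key (n - m - 1) m hm
      linarith [this]
    · simpa using hε
    · rw [dist_comm]
      have : m = n + 1 + (m - n - 1) := by omega
      rw [this]
      have := key (m - n - 1) n hn
      linarith [this]
  -- any orbit limit is a fixed point
  have hfix : ∀ y ζ : X, Tendsto (fun n : ℕ => T^[n] y) atTop (nhds ζ) → T ζ = ζ := by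
    intro y ζ hζ
    have h1 : Tendsto (fun n : ℕ => T^[n+1] y) atTop (nhds ζ) :=
      hζ.comp (tendsto_add_atTop_nat 1)
    have h2 : Tendsto (fun n : ℕ => T (T^[n] y)) atTop (nhds (T ζ)) :=
      (hTcont.tendsto ζ).comp hζ
    have h3 : Tendsto (fun n : ℕ => T^[n+1] y) atTop (nhds (T ζ)) := by
      simpa [Function.iterate_succ_apply'] using h2
    exact tendsto_nhds_unique h3 h1
  obtain ⟨x₀⟩ := ‹Nonempty X›
  obtain ⟨ξ, hξ⟩ := cauchySeq_tendsto_of_complete (hcauchy x₀)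
  have hTξ : T ξ = ξ := hfix x₀ ξ hξ
  have huniq : ∀ ζ : X, T ζ = ζ → ζ = ξ := by
    intro ζ hζ
    by_contra hne'
    have := hcon ζ ξ hne'
    rw [hζ, hTξ] at this
    exact lt_irrefl _ this
  refine ⟨ξ, hTξ, huniq, fun x => ?_⟩
  obtain ⟨ζ, hζ⟩ := cauchySeq_tendsto_of_complete (hcauchy x)
  rwa [huniq ζ (hfix x ζ hζ)] at hζ
end

section
/- Let Ω ⊆ ℝⁿ be a bounded open set, X = L²(Ω), K : ℝ → (0,∞) with ‖K‖_{BS²}‖Q‖_{L²} ≥ 1, Q ∈ L²(Ω) nonnegative, and define f(t,φ)(x) = K(t)·(‖φ‖/(1+‖φ‖))·Q(x) + H(t,x) for some H ≥ 0. Then f satisfies the Meir–Keeler-type condition: for every ε > 0 there exists δ > 0 (e.g. δ = ε²) such that for all φ₁, φ₂ ∈ X with ε ≤ ‖φ₁ − φ₂‖ < ε + δ, one has sup_{t ∈ ℝ}(∫_t^{t+1}‖f(s,φ₁) − f(s,φ₂)‖² ds)^{1/2} < ‖K‖_{BS²}‖Q‖ ε; but f is not a uniformly strict contraction in its second variable with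 respect to the BS²-norm. -/
open MeasureTheory Set

private lemma rpow_half_sq (x : ℝ) (hx : 0 ≤ x) : ((x ^ 2 : ℝ)) ^ ((1:ℝ)/2) = x := by
  rw [← Real.rpow_natCast x 2, ← Real.rpow_mul hx]
  norm_num

private lemma gdiff_lt (a b ε d : ℝ) (ha : 0 ≤ a) (hb : 0 ≤ b) (hε : 0 < ε)
    (hd1 : ε ≤ d) (hd2 : d < ε + ε ^ 2) (hab1 : |a - b| ≤ d) (hab2 : d ≤ a + b) :
    |a / (1 + a) - b / (1 + b)| < ε := by
  have h1 : (0:ℝ) < 1 + a := by linarith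
  have h2 : (0:ℝ) < 1 + b := by linarith
  have key : a / (1 + a) - b / (1 + b) = (a - b) / ((1 + a) * (1 + b)) := by
    field_simp; ring
  rw [key, abs_div, abs_of_pos (mul_pos h1 h2), div_lt_iff₀ (mul_pos h1 h2)]
  nlinarith [abs_nonneg (a - b), mul_nonneg ha hb,
    mul_le_mul_of_nonneg_left hd1 hε.le, mul_le_mul_of_nonneg_left hab2 hε.le]

/-- The function `f(t,φ) = K(t) (‖φ‖/(1+‖φ‖)) Q + H(t)` on `X = L²(Ω)` satisfies the
Meir–Keeler-type condition with constant `‖K‖_{BS²} ‖Q‖`, but is not a uniformly strict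
contraction in its second variable. -/
theorem meirKeeler_but_not_contraction_L2
    {n : ℕ} (Ω : Set (EuclideanSpace ℝ (Fin n)))
    (hΩo : IsOpen Ω) (hΩb : Bornology.IsBounded Ω)
    (K : ℝ → ℝ) (hK : ∀ t, 0 < K t)
    (Q : MeasureTheory.Lp ℝ 2 (MeasureTheory.volume.restrict Ω)) (hQ : 0 ≤ Q)
    (H : ℝ → MeasureTheory.Lp ℝ 2 (MeasureTheory.volume.restrict Ω))
    (hH : ∀ t, 0 ≤ H t)
    (KB : ℝ)
    (hKB : IsLUB {y : ℝ | ∃ t : ℝ, y = (∫ s in Set.Ioc t (t + 1), K s ^ 2) ^ ((1 : ℝ) / 2)} KB)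
    (hKQ : 1 ≤ KB * ‖Q‖)
    (f : ℝ → MeasureTheory.Lp ℝ 2 (MeasureTheory.volume.restrict Ω) →
      MeasureTheory.Lp ℝ 2 (MeasureTheory.volume.restrict Ω))
    (hf : ∀ t φ, f t φ = (K t * (‖φ‖ / (1 + ‖φ‖))) • Q + H t) :
    (∀ ε : ℝ, 0 < ε → ∃ δ : ℝ, 0 < δ ∧
      ∀ φ₁ φ₂, ε ≤ ‖φ₁ - φ₂‖ → ‖φ₁ - φ₂‖ < ε + δ →
        ∀ t : ℝ, (∫ s in Set.Ioc t (t + 1), ‖f s φ₁ - f s φ₂‖ ^ 2) ^ ((1 : ℝ) / 2) <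
          KB * ‖Q‖ * ε) ∧
    ¬ ∃ Kt : ℝ, 0 < Kt ∧ Kt < 1 ∧ ∀ (t : ℝ) φ₁ φ₂,
        ‖f t φ₁ - f t φ₂‖ ≤ Kt * ‖φ₁ - φ₂‖ := by
  have hQpos : 0 < ‖Q‖ := by
    rcases (norm_nonneg Q).lt_or_eq with h | h
    · exact h
    · exfalso; rw [← h, mul_zero] at hKQ; linarith
  have hmem : ∀ t : ℝ, (∫ s in Set.Ioc t (t + 1), K s ^ 2) ^ ((1:ℝ)/2) ≤ KB := fun t =>
    hKB.1 ⟨t, rfl⟩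
  have hI0 : ∀ t : ℝ, 0 ≤ ∫ s in Set.Ioc t (t + 1), K s ^ 2 := fun t =>
    integral_nonneg fun s => sq_nonneg _
  have hKB0 : 0 ≤ KB := le_trans (Real.rpow_nonneg (hI0 0) _) (hmem 0)
  have hKBpos : 0 < KB := by
    rcases hKB0.lt_or_eq with h | h
    · exact h
    · exfalso; rw [← h, zero_mul] at hKQ; linarith
  constructor
  · intro ε hε
    refine ⟨ε ^ 2, by positivity, ?_⟩
    intro φ₁ φ₂ h1 h2 t
    set g1 := ‖φ₁‖ / (1 + ‖φ₁‖) with hg1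
    set g2 := ‖φ₂‖ / (1 + ‖φ₂‖) with hg2
    have hΔ : |g1 - g2| < ε := gdiff_lt _ _ _ _ (norm_nonneg _) (norm_nonneg _) hε h1 h2
      (abs_norm_sub_norm_le _ _) (norm_sub_le _ _)
    have hnorm : ∀ s : ℝ, ‖f s φ₁ - f s φ₂‖ = K s * (|g1 - g2| * ‖Q‖) := by
      intro s
      rw [hf, hf, add_sub_add_right_eq_sub, ← sub_smul, ← mul_sub, norm_smul,
        Real.norm_eq_abs, abs_mul, abs_of_pos (hK s)]
      ring
    have hint : (∫ s in Set.Ioc t (t+1), ‖f s φ₁ - f s φ₂‖ ^ 2)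
        = (|g1 - g2| * ‖Q‖)^2 * ∫ s in Set.Ioc t (t+1), K s ^ 2 := by
      rw [← integral_const_mul]
      refine integral_congr_ae (Filter.Eventually.of_forall fun s => ?_)
      dsimp only; rw [hnorm s]; ring
    rw [hint]
    set c := |g1 - g2| * ‖Q‖ with hc
    have hc0 : 0 ≤ c := mul_nonneg (abs_nonneg _) (norm_nonneg _)
    rw [Real.mul_rpow (by positivity) (hI0 t)]
    rw [rpow_half_sq c hc0]
    calc c * (∫ s in Set.Ioc t (t+1), K s ^ 2) ^ ((1:ℝ)/2)
        ≤ c * KB := mul_le_mul_of_nonneg_left (hmem t) hc0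
      _ < (ε * ‖Q‖) * KB := by
          exact mul_lt_mul_of_pos_right (mul_lt_mul_of_pos_right hΔ hQpos) hKBpos
      _ = KB * ‖Q‖ * ε := by ring
  · rintro ⟨Kt, hKt0, hKt1, hcon⟩
    have hKbound : ∀ t, K t * ‖Q‖ ≤ Kt := by
      intro t
      refine le_of_forall_pos_le_add fun η hη => ?_
      set cc := η / (Kt * ‖Q‖) with hccdef
      have hcpos : 0 < cc := div_pos hη (mul_pos hKt0 hQpos)
      have hr : ‖(cc • Q : Lp ℝ 2 (volume.restrict Ω))‖ = cc * ‖Q‖ := by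
        rw [norm_smul, Real.norm_eq_abs, abs_of_pos hcpos]
      have h1r : (0:ℝ) < 1 + cc * ‖Q‖ := by positivity
      have hft0 : f t 0 = H t := by rw [hf]; simp
      have hdiff : f t (cc • Q) - f t 0 = (K t * (cc * ‖Q‖ / (1 + cc * ‖Q‖))) • Q := by
        rw [hf, hft0, hr, add_sub_cancel_right]
      have hineq := hcon t (cc • Q) 0
      rw [sub_zero, hr, hdiff, norm_smul, Real.norm_eq_abs,
        abs_of_nonneg (mul_nonneg (hK t).le (by positivity))] at hineq
      have hKtr : Kt * (cc * ‖Q‖) = η := by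
        rw [hccdef]; field_simp
      have hineq2 : K t * ‖Q‖ * (cc * ‖Q‖) ≤ Kt * (cc * ‖Q‖) * (1 + cc * ‖Q‖) := by
        have h := mul_le_mul_of_nonneg_right hineq h1r.le
        calc K t * ‖Q‖ * (cc * ‖Q‖)
            = K t * (cc * ‖Q‖ / (1 + cc * ‖Q‖)) * ‖Q‖ * (1 + cc * ‖Q‖) := by
              field_simp
          _ ≤ Kt * (cc * ‖Q‖) * (1 + cc * ‖Q‖) := h
      nlinarith [mul_pos hcpos hQpos, mul_le_mul_of_nonneg_right hKtr.le (mul_pos hcpos hQpos).le]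
    have hKB_le : KB ≤ Kt / ‖Q‖ := by
      apply hKB.2
      rintro y ⟨t, rfl⟩
      have hCpos : 0 < Kt / ‖Q‖ := div_pos hKt0 hQpos
      have hKle : ∀ s : ℝ, K s ^ 2 ≤ (Kt / ‖Q‖)^2 := by
        intro s
        have h1 : K s ≤ Kt / ‖Q‖ := by
          rw [le_div_iff₀ hQpos]; exact hKbound s
        nlinarith [(hK s).le]
      haveI : IsFiniteMeasure (volume.restrict (Set.Ioc t (t+1))) := by
        constructor
        rw [Measure.restrict_apply_univ, Real.volume_Ioc]
        exact ENNReal.ofReal_lt_top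
      have hintle : (∫ s in Set.Ioc t (t+1), K s ^2) ≤ (Kt/‖Q‖)^2 := by
        have h := integral_mono_of_nonneg (μ := volume.restrict (Set.Ioc t (t+1)))
          (f := fun s => K s ^ 2) (g := fun _ => (Kt/‖Q‖)^2)
          (Filter.Eventually.of_forall fun s => sq_nonneg _) (integrable_const _)
          (Filter.Eventually.of_forall hKle)
        rwa [integral_const, measureReal_restrict_apply_univ, measureReal_def, Real.volume_Ioc,
          show t + 1 - t = 1 by ring, ENNReal.toReal_ofReal zero_le_one, one_smul] at h
      calc (∫ s in Set.Ioc t (t+1), K s ^2) ^ ((1:ℝ)/2)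
          ≤ ((Kt/‖Q‖)^2) ^ ((1:ℝ)/2) := Real.rpow_le_rpow (hI0 t) hintle (by norm_num)
        _ = Kt / ‖Q‖ := rpow_half_sq _ hCpos.le
    have : KB * ‖Q‖ ≤ Kt := by
      rw [← le_div_iff₀ hQpos]; exact hKB_le
    linarith
end
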